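/- arXiv:math/0410077 — 2 statements merged into one kernel-verified Lean document; each statement's English description precedes it below -/
import Mathlib

section
/- The comultiplication Δ(W) = W ⊗ W (matrix coproduct), counit ε(w^1)=1, ε(w^2)=0, and antipode S(w^1)=w̄^1, S(w^2)=−w^2 make the commutative *-algebra generated by w^1, w^2 with relation w^1 w̄^1 + w^2 w̄^2 = 1 into a Hopf algebra, and the map Δ_R sending (z^1,z^2,z^3,z^4) ↦ (z^1,z^2,z^3,z^4) ⊗-entrywise multiplied by diag(W,W) extends to a *-algebra homomorphism A(S^7_{θ'}) → A(S^7_{θ'}) ⊗ A(SU(2)) which is a right comodule-algebra structure (coassociative and counital). -/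
open scoped TensorProduct

noncomputable section

/-- The deformation matrix λ'^{ij} of the sphere S^7_{θ'}: λ'^{12}=λ'^{34}=1 and
λ'^{13}=λ'^{14}=λ'^{23}=λ'^{24}=μ (indices 0-based), with λ'^{ji} = (λ'^{ij})⁻¹. -/
def lam7 (μ : ℂ) (i j : Fin 4) : ℂ :=
  if ((i : ℕ) < 2 ∧ (j : ℕ) < 2) ∨ (2 ≤ (i : ℕ) ∧ 2 ≤ (j : ℕ)) then 1
  else if (i : ℕ) < 2 then μ else μ⁻¹

variable {A : Type} [Ring A] [Algebra ℂ A] [StarRing A] [StarModule ℂ A]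

/-- The defining relations of A(S^7_{θ'}): commutation relations among the generators and
their adjoints, and the sphere relation Σ_i z^i z̄^i = 1. -/
def S7Rel (μ : ℂ) (z : Fin 4 → A) : Prop :=
  (∀ i j, z i * z j = lam7 μ i j • (z j * z i)) ∧
  (∀ i j, star (z i) * z j = lam7 μ j i • (z j * star (z i))) ∧
  (∀ i j, star (z i) * star (z j) = lam7 μ i j • (star (z j) * star (z i))) ∧
  (∑ i, z i * star (z i)) = 1

/-- α = 2(z^1 z̄^3 + z^2 z̄^4). -/
def elA (z : Fin 4 → A) : A := 2 * (z 0 * star (z 2) + z 1 * star (z 3))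

/-- β = 2(−z^1 z^4 + z^2 z^3). -/
def elB (z : Fin 4 → A) : A := 2 * (-(z 0 * z 3) + z 1 * z 2)

/-- x = z^1 z̄^1 + z^2 z̄^2 − z^3 z̄^3 − z^4 z̄^4. -/
def elX (z : Fin 4 → A) : A :=
  z 0 * star (z 0) + z 1 * star (z 1) - z 2 * star (z 2) - z 3 * star (z 3)

/-- |ψ_1⟩ = (z^1, −z̄^2, z^3, −z̄^4)^t. -/
def psi1 (z : Fin 4 → A) : Fin 4 → A := ![z 0, -star (z 1), z 2, -star (z 3)]

/-- |ψ_2⟩ = (z^2, z̄^1, z^4, z̄^3)^t. -/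
def psi2 (z : Fin 4 → A) : Fin 4 → A := ![z 1, star (z 0), z 3, star (z 2)]

/-- The projection p = |ψ_1⟩⟨ψ_1| + |ψ_2⟩⟨ψ_2| as a 4×4 matrix. -/
def projP (z : Fin 4 → A) : Matrix (Fin 4) (Fin 4) A :=
  fun i j => psi1 z i * star (psi1 z j) + psi2 z i * star (psi2 z j)


set_option linter.unusedSectionVars false
set_option maxHeartbeats 1000000

section TensorStar
variable {A₁ H₁ : Type} [Ring A₁] [Algebra ℂ A₁] [StarRing A₁] [StarModule ℂ A₁]
  [Ring H₁] [Algebra ℂ H₁] [StarRing H₁] [StarModule ℂ H₁]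
def tstarHom : A₁ ⊗[ℂ] H₁ →+ A₁ ⊗[ℂ] H₁ :=
  TensorProduct.liftAddHom
    { toFun := fun a =>
        { toFun := fun h => star a ⊗ₜ[ℂ] star h
          map_zero' := by simp
          map_add' := fun h k => by simp [star_add, TensorProduct.tmul_add] }
      map_zero' := by ext h; simp
      map_add' := fun a b => by ext h; simp [star_add, TensorProduct.add_tmul] }
    (fun c a h => by
      simp [star_smul, TensorProduct.smul_tmul', TensorProduct.tmul_smul])
@[simp] lemma tstarHom_tmul (a : A₁) (h : H₁) :
    tstarHom (a ⊗ₜ[ℂ] h) = star a ⊗ₜ[ℂ] star h := rfl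
instance tensorStarRing : StarRing (A₁ ⊗[ℂ] H₁) where
  star x := tstarHom x
  star_involutive x := by
    refine x.induction_on ?_ (fun a h => ?_) (fun u v hu hv => ?_)
    · simp
    · show tstarHom (tstarHom (a ⊗ₜ[ℂ] h)) = a ⊗ₜ[ℂ] h
      simp
    · show tstarHom (tstarHom (u + v)) = u + v
      rw [map_add, map_add]
      exact congrArg₂ (· + ·) hu hv
  star_mul x y := by
    show tstarHom (x * y) = tstarHom y * tstarHom x
    refine x.induction_on ?_ (fun a h => ?_) (fun u v hu hv => ?_)
    · simp
    · refine y.induction_on ?_ (fun b k => ?_) (fun u v hu hv => ?_)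
      · simp
      · show tstarHom ((a ⊗ₜ[ℂ] h) * (b ⊗ₜ[ℂ] k)) = _
        simp [Algebra.TensorProduct.tmul_mul_tmul]
      · rw [mul_add, map_add, map_add, hu, hv, add_mul]
    · rw [add_mul, map_add, map_add, hu, hv, mul_add]
  star_add x y := map_add tstarHom x y
@[simp] lemma star_tmul' (a : A₁) (h : H₁) :
    star (a ⊗ₜ[ℂ] h) = star a ⊗ₜ[ℂ] star h := rfl
instance tensorStarModule : StarModule ℂ (A₁ ⊗[ℂ] H₁) where
  star_smul c x := by
    refine x.induction_on ?_ (fun a h => ?_) (fun u v hu hv => ?_)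
    · simp
    · show tstarHom (c • (a ⊗ₜ[ℂ] h)) = star c • tstarHom (a ⊗ₜ[ℂ] h)
      rw [TensorProduct.smul_tmul']
      simp [star_smul, TensorProduct.smul_tmul']
    · show tstarHom (c • (u + v)) = star c • tstarHom (u + v)
      rw [smul_add, map_add, map_add, smul_add]
      exact congrArg₂ (· + ·) hu hv
end TensorStar

lemma key_comm {T : Type} [CommRing T] (l1 l2 l1' l2' r1 r2 r1' r2' : T)
    (hl : l1 * l1' + l2 * l2' = 1) (hr : r1 * r1' + r2 * r2' = 1) :
    (l1 * r1 - l2 * r2') * (l1' * r1' - l2' * r2) +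
      (l1 * r2 + l2 * r1') * (l1' * r2' + l2' * r1) = 1 := by
  linear_combination (r1 * r1' + r2 * r2') * hl + hr

lemma comm_lift {A H : Type} [Ring A] [Algebra ℂ A] [CommRing H] [Algebra ℂ H]
    (c : ℂ) (x y x' y' : A) (h k h' k' : H)
    (h1 : x * x' = c • (x' * x)) (h2 : x * y' = c • (y' * x))
    (h3 : y * x' = c • (x' * y)) (h4 : y * y' = c • (y' * y)) :
    (x ⊗ₜ[ℂ] h + y ⊗ₜ[ℂ] k) * (x' ⊗ₜ[ℂ] h' + y' ⊗ₜ[ℂ] k') =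
      c • ((x' ⊗ₜ[ℂ] h' + y' ⊗ₜ[ℂ] k') * (x ⊗ₜ[ℂ] h + y ⊗ₜ[ℂ] k)) := by
  rw [add_mul, mul_add, mul_add, add_mul, mul_add, mul_add]
  simp only [Algebra.TensorProduct.tmul_mul_tmul, h1, h2, h3, h4,
    TensorProduct.smul_tmul', smul_add, mul_comm]
  abel

lemma pair_sphere {A H : Type} [Ring A] [Algebra ℂ A] [StarRing A] [StarModule ℂ A]
    [CommRing H] [Algebra ℂ H] [StarRing H] [StarModule ℂ H]
    (a b : A) (w₁ w₂ : H) (hw : w₁ * star w₁ + w₂ * star w₂ = 1) :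
    (a ⊗ₜ[ℂ] w₁ - b ⊗ₜ[ℂ] star w₂) * star (a ⊗ₜ[ℂ] w₁ - b ⊗ₜ[ℂ] star w₂) +
      (a ⊗ₜ[ℂ] w₂ + b ⊗ₜ[ℂ] star w₁) * star (a ⊗ₜ[ℂ] w₂ + b ⊗ₜ[ℂ] star w₁) =
      (a * star a + b * star b) ⊗ₜ[ℂ] 1 := by
  have hw2 : star w₂ * w₂ + star w₁ * w₁ = 1 := by
    rw [mul_comm (star w₂) w₂, mul_comm (star w₁) w₁, add_comm]; exact hw
  simp only [star_sub, star_add, star_tmul', star_star]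
  rw [sub_mul, mul_sub, mul_sub, add_mul, mul_add, mul_add]
  simp only [Algebra.TensorProduct.tmul_mul_tmul]
  rw [TensorProduct.add_tmul,
    show ((a * star a) ⊗ₜ[ℂ] (1 : H)) = (a * star a) ⊗ₜ[ℂ] (w₁ * star w₁) +
      (a * star a) ⊗ₜ[ℂ] (w₂ * star w₂) by rw [← TensorProduct.tmul_add, hw],
    show ((b * star b) ⊗ₜ[ℂ] (1 : H)) = (b * star b) ⊗ₜ[ℂ] (star w₂ * w₂) +
      (b * star b) ⊗ₜ[ℂ] (star w₁ * w₁) by rw [← TensorProduct.tmul_add, hw2],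
    mul_comm w₂ w₁, mul_comm (star w₁) (star w₂)]
  abel

lemma lam7_congr (μ : ℂ) {a b i j : Fin 4} (ha : ((a : ℕ) < 2) ↔ ((i : ℕ) < 2))
    (hb : ((b : ℕ) < 2) ↔ ((j : ℕ) < 2)) : lam7 μ a b = lam7 μ i j := by
  by_cases h1 : ((i : ℕ) < 2) <;> by_cases h2 : ((j : ℕ) < 2) <;>
    simp_all [lam7, not_lt] <;> split_ifs <;> first | rfl | omega


lemma genH {H : Type} [CommRing H] [Algebra ℂ H] [StarRing H] [StarModule ℂ H]
    (w₁ w₂ : H) (hw : w₁ * star w₁ + w₂ * star w₂ = 1)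
    (hHuniv : ∀ (B : Type) [CommRing B] [Algebra ℂ B] [StarRing B] [StarModule ℂ B]
      (v₁ v₂ : B), v₁ * star v₁ + v₂ * star v₂ = 1 →
      ∃! f : H →⋆ₐ[ℂ] B, f w₁ = v₁ ∧ f w₂ = v₂) :
    Algebra.adjoin ℂ ({w₁, w₂, star w₁, star w₂} : Set H) = ⊤ := by
  set S := StarAlgebra.adjoin ℂ ({w₁, w₂} : Set H) with hS
  have hm1 : w₁ ∈ S := StarAlgebra.subset_adjoin ℂ _ (by simp)
  have hm2 : w₂ ∈ S := StarAlgebra.subset_adjoin ℂ _ (by simp)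
  have hw' : (⟨w₁, hm1⟩ : S) * star (⟨w₁, hm1⟩ : S) + (⟨w₂, hm2⟩ : S) * star (⟨w₂, hm2⟩ : S) = 1 :=
    Subtype.ext (by simpa using hw)
  obtain ⟨f, hf, -⟩ := hHuniv S _ _ hw'
  obtain ⟨g, -, hgu⟩ := hHuniv H w₁ w₂ hw
  have h1 : S.subtype.comp f = g := hgu _ ⟨by simp [hf.1], by simp [hf.2]⟩
  have h2 : StarAlgHom.id ℂ H = g := hgu _ ⟨rfl, rfl⟩
  have hall : ∀ h : H, h ∈ S := by
    intro h
    have heq : (f h : H) = h := by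
      have := DFunLike.congr_fun (h1.trans h2.symm) h
      simpa using this
    exact heq ▸ (f h).2
  have hst : S = ⊤ := StarSubalgebra.eq_top_iff.mpr hall
  have := congrArg StarSubalgebra.toSubalgebra hst
  rw [StarAlgebra.adjoin_toSubalgebra, StarSubalgebra.top_toSubalgebra] at this
  rw [← this]
  congr 1
  have hstar : star ({w₁, w₂} : Set H) = {star w₁, star w₂} := by
    ext x
    simp only [Set.mem_star, Set.mem_insert_iff, Set.mem_singleton_iff]
    constructor
    · rintro (h | h)
      · left; rw [← h, star_star]
      · right; rw [← h, star_star]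
    · rintro (rfl | rfl) <;> simp
  rw [hstar]
  ext x
  simp only [Set.mem_union, Set.mem_insert_iff, Set.mem_singleton_iff]
  tauto

lemma genA {A : Type} [Ring A] [Algebra ℂ A] [StarRing A] [StarModule ℂ A]
    (μ : ℂ) (z : Fin 4 → A)
    (h1 : ∀ i j, z i * z j = lam7 μ i j • (z j * z i))
    (h2 : ∀ i j, star (z i) * z j = lam7 μ j i • (z j * star (z i)))
    (h3 : ∀ i j, star (z i) * star (z j) = lam7 μ i j • (star (z j) * star (z i)))
    (h4 : (∑ i, z i * star (z i)) = 1)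
    (hAuniv : ∀ (B : Type) [Ring B] [Algebra ℂ B] [StarRing B] [StarModule ℂ B]
      (v : Fin 4 → B),
      (∀ i j, v i * v j = lam7 μ i j • (v j * v i)) →
      (∀ i j, star (v i) * v j = lam7 μ j i • (v j * star (v i))) →
      (∀ i j, star (v i) * star (v j) = lam7 μ i j • (star (v j) * star (v i))) →
      (∑ i, v i * star (v i)) = 1 →
      ∃! f : A →⋆ₐ[ℂ] B, ∀ i, f (z i) = v i) :
    Algebra.adjoin ℂ (Set.range z ∪ star (Set.range z)) = ⊤ := by
  set S := StarAlgebra.adjoin ℂ (Set.range z) with hS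
  have hm : ∀ i, z i ∈ S := fun i => StarAlgebra.subset_adjoin ℂ _ ⟨i, rfl⟩
  set v : Fin 4 → S := fun i => ⟨z i, hm i⟩ with hv
  have r1 : ∀ i j, v i * v j = lam7 μ i j • (v j * v i) :=
    fun i j => Subtype.ext (by simpa using h1 i j)
  have r2 : ∀ i j, star (v i) * v j = lam7 μ j i • (v j * star (v i)) :=
    fun i j => Subtype.ext (by simpa using h2 i j)
  have r3 : ∀ i j, star (v i) * star (v j) = lam7 μ i j • (star (v j) * star (v i)) :=
    fun i j => Subtype.ext (by simpa using h3 i j)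
  have r4 : (∑ i, v i * star (v i)) = 1 := Subtype.ext (by push_cast; simpa using h4)
  obtain ⟨f, hf, -⟩ := hAuniv S v r1 r2 r3 r4
  obtain ⟨g, -, hgu⟩ := hAuniv A z h1 h2 h3 h4
  have e1 : S.subtype.comp f = g := hgu _ (fun i => by simp [hf i, hv])
  have e2 : StarAlgHom.id ℂ A = g := hgu _ (fun i => rfl)
  have hall : ∀ a : A, a ∈ S := by
    intro a
    have heq : (f a : A) = a := by
      have := DFunLike.congr_fun (e1.trans e2.symm) a
      simpa using this
    exact heq ▸ (f a).2
  have hst : S = ⊤ := StarSubalgebra.eq_top_iff.mpr hall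
  have := congrArg StarSubalgebra.toSubalgebra hst
  rw [StarAlgebra.adjoin_toSubalgebra, StarSubalgebra.top_toSubalgebra] at this
  exact this

section CoactAux
variable {A₂ H₂ : Type} [Ring A₂] [Algebra ℂ A₂] [StarRing A₂] [StarModule ℂ A₂]
  [CommRing H₂] [Algebra ℂ H₂] [StarRing H₂] [StarModule ℂ H₂]

/-- The coaction vector: images of the generators z under Δ_R. -/
def coactVec (z : Fin 4 → A₂) (w₁ w₂ : H₂) : Fin 4 → A₂ ⊗[ℂ] H₂ := fun i =>
  z (![0, 0, 2, 2] i) ⊗ₜ[ℂ] (![w₁, w₂, w₁, w₂] i) +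
    z (![1, 1, 3, 3] i) ⊗ₜ[ℂ] (![-star w₂, star w₁, -star w₂, star w₁] i)

variable (μ : ℂ) (z : Fin 4 → A₂) (w₁ w₂ : H₂)

lemma pblk : ∀ i : Fin 4, (((![0, 0, 2, 2] : Fin 4 → Fin 4) i : ℕ) < 2 ↔ (i : ℕ) < 2) := by
  decide

lemma qblk : ∀ i : Fin 4, (((![1, 1, 3, 3] : Fin 4 → Fin 4) i : ℕ) < 2 ↔ (i : ℕ) < 2) := by
  decide

lemma coactVec_rel1 (h1 : ∀ i j, z i * z j = lam7 μ i j • (z j * z i)) :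
    ∀ i j, coactVec z w₁ w₂ i * coactVec z w₁ w₂ j =
      lam7 μ i j • (coactVec z w₁ w₂ j * coactVec z w₁ w₂ i) := by
  intro i j
  simp only [coactVec]
  refine comm_lift (lam7 μ i j) _ _ _ _ _ _ _ _ ?_ ?_ ?_ ?_
  · rw [h1, lam7_congr μ (pblk i) (pblk j)]
  · rw [h1, lam7_congr μ (pblk i) (qblk j)]
  · rw [h1, lam7_congr μ (qblk i) (pblk j)]
  · rw [h1, lam7_congr μ (qblk i) (qblk j)]

lemma coactVec_star (i : Fin 4) :
    star (coactVec z w₁ w₂ i) =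
      star (z (![0, 0, 2, 2] i)) ⊗ₜ[ℂ] star ((![w₁, w₂, w₁, w₂] : Fin 4 → H₂) i) +
      star (z (![1, 1, 3, 3] i)) ⊗ₜ[ℂ]
        star ((![-star w₂, star w₁, -star w₂, star w₁] : Fin 4 → H₂) i) := by
  simp [coactVec, star_add]

lemma coactVec_rel2 (h2 : ∀ i j, star (z i) * z j = lam7 μ j i • (z j * star (z i))) :
    ∀ i j, star (coactVec z w₁ w₂ i) * coactVec z w₁ w₂ j =
      lam7 μ j i • (coactVec z w₁ w₂ j * star (coactVec z w₁ w₂ i)) := by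
  intro i j
  rw [coactVec_star]
  simp only [coactVec]
  refine comm_lift (lam7 μ j i) _ _ _ _ _ _ _ _ ?_ ?_ ?_ ?_
  · rw [h2, lam7_congr μ (pblk j) (pblk i)]
  · rw [h2, lam7_congr μ (qblk j) (pblk i)]
  · rw [h2, lam7_congr μ (pblk j) (qblk i)]
  · rw [h2, lam7_congr μ (qblk j) (qblk i)]

lemma coactVec_rel3 (h3 : ∀ i j, star (z i) * star (z j) =
      lam7 μ i j • (star (z j) * star (z i))) :
    ∀ i j, star (coactVec z w₁ w₂ i) * star (coactVec z w₁ w₂ j) =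
      lam7 μ i j • (star (coactVec z w₁ w₂ j) * star (coactVec z w₁ w₂ i)) := by
  intro i j
  rw [coactVec_star, coactVec_star]
  refine comm_lift (lam7 μ i j) _ _ _ _ _ _ _ _ ?_ ?_ ?_ ?_
  · rw [h3, lam7_congr μ (pblk i) (pblk j)]
  · rw [h3, lam7_congr μ (pblk i) (qblk j)]
  · rw [h3, lam7_congr μ (qblk i) (pblk j)]
  · rw [h3, lam7_congr μ (qblk i) (qblk j)]

lemma coactVec_zero : coactVec z w₁ w₂ 0 = z 0 ⊗ₜ[ℂ] w₁ - z 1 ⊗ₜ[ℂ] star w₂ := by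
  simp [coactVec, TensorProduct.tmul_neg, sub_eq_add_neg]

lemma coactVec_one : coactVec z w₁ w₂ 1 = z 0 ⊗ₜ[ℂ] w₂ + z 1 ⊗ₜ[ℂ] star w₁ := by
  simp [coactVec]

lemma coactVec_two : coactVec z w₁ w₂ 2 = z 2 ⊗ₜ[ℂ] w₁ - z 3 ⊗ₜ[ℂ] star w₂ := by
  simp [coactVec, TensorProduct.tmul_neg, sub_eq_add_neg]

lemma coactVec_three : coactVec z w₁ w₂ 3 = z 2 ⊗ₜ[ℂ] w₂ + z 3 ⊗ₜ[ℂ] star w₁ := by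
  simp [coactVec]

lemma coactVec_sphere (hz4 : (∑ i, z i * star (z i)) = 1)
    (hw : w₁ * star w₁ + w₂ * star w₂ = 1) :
    (∑ i, coactVec z w₁ w₂ i * star (coactVec z w₁ w₂ i)) = 1 := by
  rw [Fin.sum_univ_four, coactVec_zero, coactVec_one, coactVec_two, coactVec_three]
  have e1 := pair_sphere (z 0) (z 1) w₁ w₂ hw
  have e2 := pair_sphere (z 2) (z 3) w₁ w₂ hw
  rw [Fin.sum_univ_four] at hz4
  rw [add_assoc, e1, e2, ← TensorProduct.add_tmul, ← add_assoc, hz4]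
  exact (Algebra.TensorProduct.one_def).symm

end CoactAux

/-- Δ(W) = W⊗W, ε(w^1)=1, ε(w^2)=0, S(w^1)=w̄^1, S(w^2)=−w^2 make
A(SU(2)) into a Hopf algebra, and Δ_R extends to an algebra homomorphism
A(S^7_{θ'}) → A(S^7_{θ'}) ⊗ A(SU(2)) which is a right comodule-algebra structure
(coassociative and counital), compatible with the *-structure on generators. -/
theorem stmt14 (μ : ℂ) (z : Fin 4 → A) (hrel : S7Rel μ z)
    (hAuniv : ∀ (B : Type) [Ring B] [Algebra ℂ B] [StarRing B] [StarModule ℂ B]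
      (v : Fin 4 → B),
      (∀ i j, v i * v j = lam7 μ i j • (v j * v i)) →
      (∀ i j, star (v i) * v j = lam7 μ j i • (v j * star (v i))) →
      (∀ i j, star (v i) * star (v j) = lam7 μ i j • (star (v j) * star (v i))) →
      (∑ i, v i * star (v i)) = 1 →
      ∃! f : A →⋆ₐ[ℂ] B, ∀ i, f (z i) = v i)
    (H : Type) [CommRing H] [Algebra ℂ H] [StarRing H] [StarModule ℂ H]
    (w₁ w₂ : H) (hw : w₁ * star w₁ + w₂ * star w₂ = 1)
    (hHuniv : ∀ (B : Type) [CommRing B] [Algebra ℂ B] [StarRing B] [StarModule ℂ B]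
      (v₁ v₂ : B), v₁ * star v₁ + v₂ * star v₂ = 1 →
      ∃! f : H →⋆ₐ[ℂ] B, f w₁ = v₁ ∧ f w₂ = v₂) :
    ∃ (comul : H →ₐ[ℂ] H ⊗[ℂ] H) (counit : H →ₐ[ℂ] ℂ) (antipode : H →ₐ[ℂ] H)
      (ΔR : A →ₐ[ℂ] A ⊗[ℂ] H),
      -- matrix coproduct Δ(W) = W ⊗ W
      comul w₁ = w₁ ⊗ₜ[ℂ] w₁ - w₂ ⊗ₜ[ℂ] star w₂ ∧
      comul w₂ = w₁ ⊗ₜ[ℂ] w₂ + w₂ ⊗ₜ[ℂ] star w₁ ∧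
      counit w₁ = 1 ∧ counit w₂ = 0 ∧
      antipode w₁ = star w₁ ∧ antipode w₂ = -w₂ ∧
      -- coassociativity of Δ
      (∀ h : H, (Algebra.TensorProduct.assoc ℂ ℂ ℂ H H H)
          ((Algebra.TensorProduct.map comul (AlgHom.id ℂ H)) (comul h)) =
        (Algebra.TensorProduct.map (AlgHom.id ℂ H) comul) (comul h)) ∧
      -- counit laws
      (∀ h : H, (TensorProduct.lid ℂ H)
          ((Algebra.TensorProduct.map counit (AlgHom.id ℂ H)) (comul h)) = h) ∧
      (∀ h : H, (TensorProduct.rid ℂ H)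
          ((Algebra.TensorProduct.map (AlgHom.id ℂ H) counit) (comul h)) = h) ∧
      -- antipode laws: m ∘ (S ⊗ id) ∘ Δ = η ∘ ε = m ∘ (id ⊗ S) ∘ Δ
      (∀ h : H, (LinearMap.mul' ℂ H)
          ((TensorProduct.map antipode.toLinearMap LinearMap.id) (comul h)) =
        algebraMap ℂ H (counit h)) ∧
      (∀ h : H, (LinearMap.mul' ℂ H)
          ((TensorProduct.map LinearMap.id antipode.toLinearMap) (comul h)) =
        algebraMap ℂ H (counit h)) ∧
      -- the coaction on the generators of A(S^7_{θ'}) and their adjoints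
      ΔR (z 0) = z 0 ⊗ₜ[ℂ] w₁ - z 1 ⊗ₜ[ℂ] star w₂ ∧
      ΔR (z 1) = z 0 ⊗ₜ[ℂ] w₂ + z 1 ⊗ₜ[ℂ] star w₁ ∧
      ΔR (z 2) = z 2 ⊗ₜ[ℂ] w₁ - z 3 ⊗ₜ[ℂ] star w₂ ∧
      ΔR (z 3) = z 2 ⊗ₜ[ℂ] w₂ + z 3 ⊗ₜ[ℂ] star w₁ ∧
      ΔR (star (z 0)) = star (z 0) ⊗ₜ[ℂ] star w₁ - star (z 1) ⊗ₜ[ℂ] w₂ ∧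
      ΔR (star (z 1)) = star (z 0) ⊗ₜ[ℂ] star w₂ + star (z 1) ⊗ₜ[ℂ] w₁ ∧
      ΔR (star (z 2)) = star (z 2) ⊗ₜ[ℂ] star w₁ - star (z 3) ⊗ₜ[ℂ] w₂ ∧
      ΔR (star (z 3)) = star (z 2) ⊗ₜ[ℂ] star w₂ + star (z 3) ⊗ₜ[ℂ] w₁ ∧
      -- comodule coassociativity and counitality
      (∀ a : A, (Algebra.TensorProduct.assoc ℂ ℂ ℂ A H H)
          ((Algebra.TensorProduct.map ΔR (AlgHom.id ℂ H)) (ΔR a)) =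
        (Algebra.TensorProduct.map (AlgHom.id ℂ A) comul) (ΔR a)) ∧
      (∀ a : A, (TensorProduct.rid ℂ A)
          ((TensorProduct.map LinearMap.id counit.toLinearMap) (ΔR a)) = a) := by
  obtain ⟨hz1, hz2, hz3, hz4⟩ := hrel
  -- the comultiplication
  have hcw : (w₁ ⊗ₜ[ℂ] w₁ - w₂ ⊗ₜ[ℂ] star w₂) * star (w₁ ⊗ₜ[ℂ] w₁ - w₂ ⊗ₜ[ℂ] star w₂) +
      (w₁ ⊗ₜ[ℂ] w₂ + w₂ ⊗ₜ[ℂ] star w₁) * star (w₁ ⊗ₜ[ℂ] w₂ + w₂ ⊗ₜ[ℂ] star w₁) = 1 := by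
    rw [pair_sphere w₁ w₂ w₁ w₂ hw, hw]
    exact (Algebra.TensorProduct.one_def).symm
  obtain ⟨comul₀, ⟨hc1, hc2⟩, -⟩ := @hHuniv (H ⊗[ℂ] H) _ _ TensorProduct.instStarRing TensorProduct.instStarModule _ _ hcw
  -- the counit
  obtain ⟨counit₀, ⟨he1, he2⟩, -⟩ := hHuniv ℂ 1 0 (by simp)
  -- the antipode
  have haw : star w₁ * star (star w₁) + (-w₂) * star (-w₂) = 1 := by
    rw [star_star, star_neg, neg_mul_neg, mul_comm (star w₁) w₁]; exact hw
  obtain ⟨anti₀, ⟨ha1, ha2⟩, -⟩ := hHuniv H (star w₁) (-w₂) haw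
  -- the coaction
  obtain ⟨ΔR₀, hΔ, -⟩ := @hAuniv (A ⊗[ℂ] H) _ _ TensorProduct.instStarRing TensorProduct.instStarModule (coactVec z w₁ w₂)
    (coactVec_rel1 μ z w₁ w₂ hz1) (coactVec_rel2 μ z w₁ w₂ hz2)
    (coactVec_rel3 μ z w₁ w₂ hz3) (coactVec_sphere z w₁ w₂ hz4 hw)
  -- generator values of the coaction
  have hΔ0 : ΔR₀ (z 0) = z 0 ⊗ₜ[ℂ] w₁ - z 1 ⊗ₜ[ℂ] star w₂ := by rw [hΔ 0, coactVec_zero]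
  have hΔ1 : ΔR₀ (z 1) = z 0 ⊗ₜ[ℂ] w₂ + z 1 ⊗ₜ[ℂ] star w₁ := by rw [hΔ 1, coactVec_one]
  have hΔ2 : ΔR₀ (z 2) = z 2 ⊗ₜ[ℂ] w₁ - z 3 ⊗ₜ[ℂ] star w₂ := by rw [hΔ 2, coactVec_two]
  have hΔ3 : ΔR₀ (z 3) = z 2 ⊗ₜ[ℂ] w₂ + z 3 ⊗ₜ[ℂ] star w₁ := by rw [hΔ 3, coactVec_three]
  have hΔs0 : ΔR₀ (star (z 0)) = star (z 0) ⊗ₜ[ℂ] star w₁ - star (z 1) ⊗ₜ[ℂ] w₂ := by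
    rw [map_star, hΔ0]; simp [star_sub]
  have hΔs1 : ΔR₀ (star (z 1)) = star (z 0) ⊗ₜ[ℂ] star w₂ + star (z 1) ⊗ₜ[ℂ] w₁ := by
    rw [map_star, hΔ1]; simp [star_add]
  have hΔs2 : ΔR₀ (star (z 2)) = star (z 2) ⊗ₜ[ℂ] star w₁ - star (z 3) ⊗ₜ[ℂ] w₂ := by
    rw [map_star, hΔ2]; simp [star_sub]
  have hΔs3 : ΔR₀ (star (z 3)) = star (z 2) ⊗ₜ[ℂ] star w₂ + star (z 3) ⊗ₜ[ℂ] w₁ := by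
    rw [map_star, hΔ3]; simp [star_add]
  -- star values of the Hopf maps
  have hc1s : comul₀ (star w₁) = star w₁ ⊗ₜ[ℂ] star w₁ - star w₂ ⊗ₜ[ℂ] w₂ := by
    rw [map_star, hc1]; simp [star_sub]
  have hc2s : comul₀ (star w₂) = star w₁ ⊗ₜ[ℂ] star w₂ + star w₂ ⊗ₜ[ℂ] w₁ := by
    rw [map_star, hc2]; simp [star_add]
  have he1s : counit₀ (star w₁) = 1 := by rw [map_star, he1]; simp
  have he2s : counit₀ (star w₂) = 0 := by rw [map_star, he2]; simp
  have ha1s : anti₀ (star w₁) = w₁ := by rw [map_star, ha1, star_star]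
  have ha2s : anti₀ (star w₂) = -star w₂ := by rw [map_star, ha2, star_neg]
  -- extensionality principles
  have htopH := genH w₁ w₂ hw hHuniv
  have extH : ∀ {B : Type} [Semiring B] [Algebra ℂ B] (f g : H →ₐ[ℂ] B),
      f w₁ = g w₁ → f w₂ = g w₂ → f (star w₁) = g (star w₁) → f (star w₂) = g (star w₂) →
      f = g := by
    intro B _ _ f g e1 e2 e3 e4
    refine AlgHom.ext_of_adjoin_eq_top htopH ?_
    intro x hx
    simp only [Set.mem_insert_iff, Set.mem_singleton_iff] at hx
    rcases hx with rfl | rfl | rfl | rfl <;> assumption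
  have htopA := genA μ z hz1 hz2 hz3 hz4 hAuniv
  have extA : ∀ {B : Type} [Semiring B] [Algebra ℂ B] (f g : A →ₐ[ℂ] B),
      (∀ i, f (z i) = g (z i)) → (∀ i, f (star (z i)) = g (star (z i))) → f = g := by
    intro B _ _ f g e1 e2
    refine AlgHom.ext_of_adjoin_eq_top htopA ?_
    rintro x (⟨i, rfl⟩ | hx)
    · exact e1 i
    · obtain ⟨i, hi⟩ := Set.mem_star.mp hx
      have : x = star (z i) := by rw [hi, star_star]
      rw [this]; exact e2 i
  -- the algebra-hom versions
  refine ⟨comul₀.toAlgHom, counit₀.toAlgHom, anti₀.toAlgHom, ΔR₀.toAlgHom,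
    hc1, hc2, he1, he2, ha1, ha2, ?_, ?_, ?_, ?_, ?_,
    hΔ0, hΔ1, hΔ2, hΔ3, hΔs0, hΔs1, hΔs2, hΔs3, ?_, ?_⟩
  -- coassociativity of Δ
  · have hF : ((Algebra.TensorProduct.assoc ℂ ℂ ℂ H H H).toAlgHom.comp
        ((Algebra.TensorProduct.map comul₀.toAlgHom (AlgHom.id ℂ H)).comp comul₀.toAlgHom)) =
        (Algebra.TensorProduct.map (AlgHom.id ℂ H) comul₀.toAlgHom).comp comul₀.toAlgHom := by
      refine extH _ _ ?_ ?_ ?_ ?_ <;>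
        · simp only [AlgHom.coe_comp, Function.comp_apply, AlgEquiv.toAlgHom_eq_coe, AlgEquiv.coe_toAlgHom,
            AlgHom.coe_coe, StarAlgHom.coe_toAlgHom, hc1, hc2, hc1s, hc2s,
            map_sub, map_add, Algebra.TensorProduct.map_tmul, AlgHom.coe_id, id_eq,
            TensorProduct.sub_tmul, TensorProduct.add_tmul, TensorProduct.tmul_sub,
            TensorProduct.tmul_add, Algebra.TensorProduct.assoc_tmul] <;> abel
    intro h
    have := AlgHom.congr_fun hF h
    simpa using this
  -- counit law (left)
  · have hF : ((Algebra.TensorProduct.lid ℂ H).toAlgHom.comp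
        ((Algebra.TensorProduct.map counit₀.toAlgHom (AlgHom.id ℂ H)).comp comul₀.toAlgHom)) =
        AlgHom.id ℂ H := by
      refine extH _ _ ?_ ?_ ?_ ?_ <;>
        · simp only [AlgHom.coe_comp, Function.comp_apply, AlgEquiv.toAlgHom_eq_coe, AlgEquiv.coe_toAlgHom,
            AlgHom.coe_coe, StarAlgHom.coe_toAlgHom, hc1, hc2, hc1s, hc2s,
            map_sub, map_add, Algebra.TensorProduct.map_tmul, AlgHom.coe_id, id_eq,
                he1, he2, he1s, he2s, Algebra.TensorProduct.lid_tmul] <;> simp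
    intro h
    have hbr : ∀ x : ℂ ⊗[ℂ] H, TensorProduct.lid ℂ H x = Algebra.TensorProduct.lid ℂ H x := by
      intro x
      refine x.induction_on ?_ (fun c a => ?_) (fun u v hu hv => ?_)
      · simp
      · simp
      · simp only [map_add, hu, hv]
    have := AlgHom.congr_fun hF h
    rw [hbr]
    simpa using this
  -- counit law (right)
  · have hF : ((Algebra.TensorProduct.rid ℂ ℂ H).toAlgHom.comp
        ((Algebra.TensorProduct.map (AlgHom.id ℂ H) counit₀.toAlgHom).comp comul₀.toAlgHom)) =
        AlgHom.id ℂ H := by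
      refine extH _ _ ?_ ?_ ?_ ?_ <;>
        · simp only [AlgHom.coe_comp, Function.comp_apply, AlgEquiv.toAlgHom_eq_coe, AlgEquiv.coe_toAlgHom,
            AlgHom.coe_coe, StarAlgHom.coe_toAlgHom, hc1, hc2, hc1s, hc2s,
            map_sub, map_add, Algebra.TensorProduct.map_tmul, AlgHom.coe_id, id_eq,
            he1, he2, he1s, he2s, Algebra.TensorProduct.rid_tmul] <;> simp
    intro h
    have hbr : ∀ x : H ⊗[ℂ] ℂ, TensorProduct.rid ℂ H x = Algebra.TensorProduct.rid ℂ ℂ H x := by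
      intro x
      refine x.induction_on ?_ (fun a c => ?_) (fun u v hu hv => ?_)
      · simp
      · simp [TensorProduct.rid_tmul, Algebra.TensorProduct.rid_tmul]
      · simp only [map_add, hu, hv]
    have := AlgHom.congr_fun hF h
    rw [hbr]
    simpa using this
  -- antipode law (left)
  · have hF : ((Algebra.TensorProduct.lmul' ℂ (S := H)).comp
        ((Algebra.TensorProduct.map anti₀.toAlgHom (AlgHom.id ℂ H)).comp comul₀.toAlgHom)) =
        (Algebra.ofId ℂ H).comp counit₀.toAlgHom := by
      refine extH _ _ ?_ ?_ ?_ ?_ <;>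
        · simp only [AlgHom.coe_comp, Function.comp_apply, StarAlgHom.coe_toAlgHom,
            hc1, hc2, hc1s, hc2s, map_sub, map_add, Algebra.TensorProduct.map_tmul,
            AlgHom.coe_id, id_eq, ha1, ha2, ha1s, ha2s,
            Algebra.TensorProduct.lmul'_apply_tmul, he1, he2, he1s, he2s,
            Algebra.ofId_apply, map_one, map_zero]
          first
            | (rw [map_one]; linear_combination hw)
            | (rw [map_zero]; ring)
            | linear_combination hw
            | ring
    intro h
    have hbr : ∀ x : H ⊗[ℂ] H, LinearMap.mul' ℂ H
        (TensorProduct.map anti₀.toAlgHom.toLinearMap LinearMap.id x) =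
        Algebra.TensorProduct.lmul' ℂ (S := H)
          (Algebra.TensorProduct.map anti₀.toAlgHom (AlgHom.id ℂ H) x) := by
      intro x
      refine x.induction_on ?_ (fun a c => ?_) (fun u v hu hv => ?_)
      · simp
      · simp
      · simp only [map_add, hu, hv]
    have := AlgHom.congr_fun hF h
    rw [hbr]
    simpa [Algebra.ofId_apply] using this
  -- antipode law (right)
  · have hF : ((Algebra.TensorProduct.lmul' ℂ (S := H)).comp
        ((Algebra.TensorProduct.map (AlgHom.id ℂ H) anti₀.toAlgHom).comp comul₀.toAlgHom)) =
        (Algebra.ofId ℂ H).comp counit₀.toAlgHom := by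
      refine extH _ _ ?_ ?_ ?_ ?_ <;>
        · simp only [AlgHom.coe_comp, Function.comp_apply, StarAlgHom.coe_toAlgHom,
            hc1, hc2, hc1s, hc2s, map_sub, map_add, Algebra.TensorProduct.map_tmul,
            AlgHom.coe_id, id_eq, ha1, ha2, ha1s, ha2s,
            Algebra.TensorProduct.lmul'_apply_tmul, he1, he2, he1s, he2s,
            Algebra.ofId_apply, map_one, map_zero]
          first
            | (rw [map_one]; linear_combination hw)
            | (rw [map_zero]; ring)
            | linear_combination hw
            | ring
    intro h
    have hbr : ∀ x : H ⊗[ℂ] H, LinearMap.mul' ℂ H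
        (TensorProduct.map LinearMap.id anti₀.toAlgHom.toLinearMap x) =
        Algebra.TensorProduct.lmul' ℂ (S := H)
          (Algebra.TensorProduct.map (AlgHom.id ℂ H) anti₀.toAlgHom x) := by
      intro x
      refine x.induction_on ?_ (fun a c => ?_) (fun u v hu hv => ?_)
      · simp
      · simp
      · simp only [map_add, hu, hv]
    have := AlgHom.congr_fun hF h
    rw [hbr]
    simpa [Algebra.ofId_apply] using this
  -- comodule coassociativity
  · have hF : ((Algebra.TensorProduct.assoc ℂ ℂ ℂ A H H).toAlgHom.comp
        ((Algebra.TensorProduct.map ΔR₀.toAlgHom (AlgHom.id ℂ H)).comp ΔR₀.toAlgHom)) =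
        (Algebra.TensorProduct.map (AlgHom.id ℂ A) comul₀.toAlgHom).comp ΔR₀.toAlgHom := by
      have k0 : (Algebra.TensorProduct.assoc ℂ ℂ ℂ A H H)
          ((Algebra.TensorProduct.map ΔR₀.toAlgHom (AlgHom.id ℂ H)) (ΔR₀.toAlgHom (z 0))) =
          (Algebra.TensorProduct.map (AlgHom.id ℂ A) comul₀.toAlgHom) (ΔR₀.toAlgHom (z 0)) := by
        simp only [AlgHom.coe_comp, Function.comp_apply, AlgEquiv.toAlgHom_eq_coe, AlgEquiv.coe_toAlgHom,
            AlgHom.coe_coe, StarAlgHom.coe_toAlgHom, hΔ0, hΔ1, hΔ2, hΔ3,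
            hΔs0, hΔs1, hΔs2, hΔs3, hc1, hc2, hc1s, hc2s,
            map_sub, map_add, Algebra.TensorProduct.map_tmul, AlgHom.coe_id, id_eq,
            TensorProduct.sub_tmul, TensorProduct.add_tmul, TensorProduct.tmul_sub,
            TensorProduct.tmul_add, Algebra.TensorProduct.assoc_tmul] <;> abel
      have k1 : (Algebra.TensorProduct.assoc ℂ ℂ ℂ A H H)
          ((Algebra.TensorProduct.map ΔR₀.toAlgHom (AlgHom.id ℂ H)) (ΔR₀.toAlgHom (z 1))) =
          (Algebra.TensorProduct.map (AlgHom.id ℂ A) comul₀.toAlgHom) (ΔR₀.toAlgHom (z 1)) := by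
        simp only [AlgHom.coe_comp, Function.comp_apply, AlgEquiv.toAlgHom_eq_coe, AlgEquiv.coe_toAlgHom,
            AlgHom.coe_coe, StarAlgHom.coe_toAlgHom, hΔ0, hΔ1, hΔ2, hΔ3,
            hΔs0, hΔs1, hΔs2, hΔs3, hc1, hc2, hc1s, hc2s,
            map_sub, map_add, Algebra.TensorProduct.map_tmul, AlgHom.coe_id, id_eq,
            TensorProduct.sub_tmul, TensorProduct.add_tmul, TensorProduct.tmul_sub,
            TensorProduct.tmul_add, Algebra.TensorProduct.assoc_tmul] <;> abel
      have k2 : (Algebra.TensorProduct.assoc ℂ ℂ ℂ A H H)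
          ((Algebra.TensorProduct.map ΔR₀.toAlgHom (AlgHom.id ℂ H)) (ΔR₀.toAlgHom (z 2))) =
          (Algebra.TensorProduct.map (AlgHom.id ℂ A) comul₀.toAlgHom) (ΔR₀.toAlgHom (z 2)) := by
        simp only [AlgHom.coe_comp, Function.comp_apply, AlgEquiv.toAlgHom_eq_coe, AlgEquiv.coe_toAlgHom,
            AlgHom.coe_coe, StarAlgHom.coe_toAlgHom, hΔ0, hΔ1, hΔ2, hΔ3,
            hΔs0, hΔs1, hΔs2, hΔs3, hc1, hc2, hc1s, hc2s,
            map_sub, map_add, Algebra.TensorProduct.map_tmul, AlgHom.coe_id, id_eq,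
            TensorProduct.sub_tmul, TensorProduct.add_tmul, TensorProduct.tmul_sub,
            TensorProduct.tmul_add, Algebra.TensorProduct.assoc_tmul] <;> abel
      have k3 : (Algebra.TensorProduct.assoc ℂ ℂ ℂ A H H)
          ((Algebra.TensorProduct.map ΔR₀.toAlgHom (AlgHom.id ℂ H)) (ΔR₀.toAlgHom (z 3))) =
          (Algebra.TensorProduct.map (AlgHom.id ℂ A) comul₀.toAlgHom) (ΔR₀.toAlgHom (z 3)) := by
        simp only [AlgHom.coe_comp, Function.comp_apply, AlgEquiv.toAlgHom_eq_coe, AlgEquiv.coe_toAlgHom,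
            AlgHom.coe_coe, StarAlgHom.coe_toAlgHom, hΔ0, hΔ1, hΔ2, hΔ3,
            hΔs0, hΔs1, hΔs2, hΔs3, hc1, hc2, hc1s, hc2s,
            map_sub, map_add, Algebra.TensorProduct.map_tmul, AlgHom.coe_id, id_eq,
            TensorProduct.sub_tmul, TensorProduct.add_tmul, TensorProduct.tmul_sub,
            TensorProduct.tmul_add, Algebra.TensorProduct.assoc_tmul] <;> abel
      have k4 : (Algebra.TensorProduct.assoc ℂ ℂ ℂ A H H)
          ((Algebra.TensorProduct.map ΔR₀.toAlgHom (AlgHom.id ℂ H)) (ΔR₀.toAlgHom (star (z 0)))) =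
          (Algebra.TensorProduct.map (AlgHom.id ℂ A) comul₀.toAlgHom) (ΔR₀.toAlgHom (star (z 0))) := by
        simp only [AlgHom.coe_comp, Function.comp_apply, AlgEquiv.toAlgHom_eq_coe, AlgEquiv.coe_toAlgHom,
            AlgHom.coe_coe, StarAlgHom.coe_toAlgHom, hΔ0, hΔ1, hΔ2, hΔ3,
            hΔs0, hΔs1, hΔs2, hΔs3, hc1, hc2, hc1s, hc2s,
            map_sub, map_add, Algebra.TensorProduct.map_tmul, AlgHom.coe_id, id_eq,
            TensorProduct.sub_tmul, TensorProduct.add_tmul, TensorProduct.tmul_sub,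
            TensorProduct.tmul_add, Algebra.TensorProduct.assoc_tmul] <;> abel
      have k5 : (Algebra.TensorProduct.assoc ℂ ℂ ℂ A H H)
          ((Algebra.TensorProduct.map ΔR₀.toAlgHom (AlgHom.id ℂ H)) (ΔR₀.toAlgHom (star (z 1)))) =
          (Algebra.TensorProduct.map (AlgHom.id ℂ A) comul₀.toAlgHom) (ΔR₀.toAlgHom (star (z 1))) := by
        simp only [AlgHom.coe_comp, Function.comp_apply, AlgEquiv.toAlgHom_eq_coe, AlgEquiv.coe_toAlgHom,
            AlgHom.coe_coe, StarAlgHom.coe_toAlgHom, hΔ0, hΔ1, hΔ2, hΔ3,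
            hΔs0, hΔs1, hΔs2, hΔs3, hc1, hc2, hc1s, hc2s,
            map_sub, map_add, Algebra.TensorProduct.map_tmul, AlgHom.coe_id, id_eq,
            TensorProduct.sub_tmul, TensorProduct.add_tmul, TensorProduct.tmul_sub,
            TensorProduct.tmul_add, Algebra.TensorProduct.assoc_tmul] <;> abel
      have k6 : (Algebra.TensorProduct.assoc ℂ ℂ ℂ A H H)
          ((Algebra.TensorProduct.map ΔR₀.toAlgHom (AlgHom.id ℂ H)) (ΔR₀.toAlgHom (star (z 2)))) =
          (Algebra.TensorProduct.map (AlgHom.id ℂ A) comul₀.toAlgHom) (ΔR₀.toAlgHom (star (z 2))) := by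
        simp only [AlgHom.coe_comp, Function.comp_apply, AlgEquiv.toAlgHom_eq_coe, AlgEquiv.coe_toAlgHom,
            AlgHom.coe_coe, StarAlgHom.coe_toAlgHom, hΔ0, hΔ1, hΔ2, hΔ3,
            hΔs0, hΔs1, hΔs2, hΔs3, hc1, hc2, hc1s, hc2s,
            map_sub, map_add, Algebra.TensorProduct.map_tmul, AlgHom.coe_id, id_eq,
            TensorProduct.sub_tmul, TensorProduct.add_tmul, TensorProduct.tmul_sub,
            TensorProduct.tmul_add, Algebra.TensorProduct.assoc_tmul] <;> abel
      have k7 : (Algebra.TensorProduct.assoc ℂ ℂ ℂ A H H)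
          ((Algebra.TensorProduct.map ΔR₀.toAlgHom (AlgHom.id ℂ H)) (ΔR₀.toAlgHom (star (z 3)))) =
          (Algebra.TensorProduct.map (AlgHom.id ℂ A) comul₀.toAlgHom) (ΔR₀.toAlgHom (star (z 3))) := by
        simp only [AlgHom.coe_comp, Function.comp_apply, AlgEquiv.toAlgHom_eq_coe, AlgEquiv.coe_toAlgHom,
            AlgHom.coe_coe, StarAlgHom.coe_toAlgHom, hΔ0, hΔ1, hΔ2, hΔ3,
            hΔs0, hΔs1, hΔs2, hΔs3, hc1, hc2, hc1s, hc2s,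
            map_sub, map_add, Algebra.TensorProduct.map_tmul, AlgHom.coe_id, id_eq,
            TensorProduct.sub_tmul, TensorProduct.add_tmul, TensorProduct.tmul_sub,
            TensorProduct.tmul_add, Algebra.TensorProduct.assoc_tmul] <;> abel
      exact extA _ _ (fun i => by fin_cases i <;> [exact k0; exact k1; exact k2; exact k3])
        (fun i => by fin_cases i <;> [exact k4; exact k5; exact k6; exact k7])
    intro a
    have := AlgHom.congr_fun hF a
    simpa using this
  -- comodule counitality
  · have hF : ((Algebra.TensorProduct.rid ℂ ℂ A).toAlgHom.comp
        ((Algebra.TensorProduct.map (AlgHom.id ℂ A) counit₀.toAlgHom).comp ΔR₀.toAlgHom)) =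
        AlgHom.id ℂ A := by
      have m0 : (Algebra.TensorProduct.rid ℂ ℂ A)
          ((Algebra.TensorProduct.map (AlgHom.id ℂ A) counit₀.toAlgHom) (ΔR₀.toAlgHom (z 0))) =
          AlgHom.id ℂ A (z 0) := by
        simp only [AlgHom.coe_comp, Function.comp_apply, AlgEquiv.toAlgHom_eq_coe, AlgEquiv.coe_toAlgHom,
            AlgHom.coe_coe, StarAlgHom.coe_toAlgHom, hΔ0, hΔ1, hΔ2, hΔ3,
            hΔs0, hΔs1, hΔs2, hΔs3, map_sub, map_add, Algebra.TensorProduct.map_tmul,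
            AlgHom.coe_id, id_eq, he1, he2, he1s, he2s, Algebra.TensorProduct.rid_tmul] <;> simp
      have m1 : (Algebra.TensorProduct.rid ℂ ℂ A)
          ((Algebra.TensorProduct.map (AlgHom.id ℂ A) counit₀.toAlgHom) (ΔR₀.toAlgHom (z 1))) =
          AlgHom.id ℂ A (z 1) := by
        simp only [AlgHom.coe_comp, Function.comp_apply, AlgEquiv.toAlgHom_eq_coe, AlgEquiv.coe_toAlgHom,
            AlgHom.coe_coe, StarAlgHom.coe_toAlgHom, hΔ0, hΔ1, hΔ2, hΔ3,
            hΔs0, hΔs1, hΔs2, hΔs3, map_sub, map_add, Algebra.TensorProduct.map_tmul,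
            AlgHom.coe_id, id_eq, he1, he2, he1s, he2s, Algebra.TensorProduct.rid_tmul] <;> simp
      have m2 : (Algebra.TensorProduct.rid ℂ ℂ A)
          ((Algebra.TensorProduct.map (AlgHom.id ℂ A) counit₀.toAlgHom) (ΔR₀.toAlgHom (z 2))) =
          AlgHom.id ℂ A (z 2) := by
        simp only [AlgHom.coe_comp, Function.comp_apply, AlgEquiv.toAlgHom_eq_coe, AlgEquiv.coe_toAlgHom,
            AlgHom.coe_coe, StarAlgHom.coe_toAlgHom, hΔ0, hΔ1, hΔ2, hΔ3,
            hΔs0, hΔs1, hΔs2, hΔs3, map_sub, map_add, Algebra.TensorProduct.map_tmul,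
            AlgHom.coe_id, id_eq, he1, he2, he1s, he2s, Algebra.TensorProduct.rid_tmul] <;> simp
      have m3 : (Algebra.TensorProduct.rid ℂ ℂ A)
          ((Algebra.TensorProduct.map (AlgHom.id ℂ A) counit₀.toAlgHom) (ΔR₀.toAlgHom (z 3))) =
          AlgHom.id ℂ A (z 3) := by
        simp only [AlgHom.coe_comp, Function.comp_apply, AlgEquiv.toAlgHom_eq_coe, AlgEquiv.coe_toAlgHom,
            AlgHom.coe_coe, StarAlgHom.coe_toAlgHom, hΔ0, hΔ1, hΔ2, hΔ3,
            hΔs0, hΔs1, hΔs2, hΔs3, map_sub, map_add, Algebra.TensorProduct.map_tmul,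
            AlgHom.coe_id, id_eq, he1, he2, he1s, he2s, Algebra.TensorProduct.rid_tmul] <;> simp
      have m4 : (Algebra.TensorProduct.rid ℂ ℂ A)
          ((Algebra.TensorProduct.map (AlgHom.id ℂ A) counit₀.toAlgHom) (ΔR₀.toAlgHom (star (z 0)))) =
          AlgHom.id ℂ A (star (z 0)) := by
        simp only [AlgHom.coe_comp, Function.comp_apply, AlgEquiv.toAlgHom_eq_coe, AlgEquiv.coe_toAlgHom,
            AlgHom.coe_coe, StarAlgHom.coe_toAlgHom, hΔ0, hΔ1, hΔ2, hΔ3,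
            hΔs0, hΔs1, hΔs2, hΔs3, map_sub, map_add, Algebra.TensorProduct.map_tmul,
            AlgHom.coe_id, id_eq, he1, he2, he1s, he2s, Algebra.TensorProduct.rid_tmul] <;> simp
      have m5 : (Algebra.TensorProduct.rid ℂ ℂ A)
          ((Algebra.TensorProduct.map (AlgHom.id ℂ A) counit₀.toAlgHom) (ΔR₀.toAlgHom (star (z 1)))) =
          AlgHom.id ℂ A (star (z 1)) := by
        simp only [AlgHom.coe_comp, Function.comp_apply, AlgEquiv.toAlgHom_eq_coe, AlgEquiv.coe_toAlgHom,
            AlgHom.coe_coe, StarAlgHom.coe_toAlgHom, hΔ0, hΔ1, hΔ2, hΔ3,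
            hΔs0, hΔs1, hΔs2, hΔs3, map_sub, map_add, Algebra.TensorProduct.map_tmul,
            AlgHom.coe_id, id_eq, he1, he2, he1s, he2s, Algebra.TensorProduct.rid_tmul] <;> simp
      have m6 : (Algebra.TensorProduct.rid ℂ ℂ A)
          ((Algebra.TensorProduct.map (AlgHom.id ℂ A) counit₀.toAlgHom) (ΔR₀.toAlgHom (star (z 2)))) =
          AlgHom.id ℂ A (star (z 2)) := by
        simp only [AlgHom.coe_comp, Function.comp_apply, AlgEquiv.toAlgHom_eq_coe, AlgEquiv.coe_toAlgHom,
            AlgHom.coe_coe, StarAlgHom.coe_toAlgHom, hΔ0, hΔ1, hΔ2, hΔ3,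
            hΔs0, hΔs1, hΔs2, hΔs3, map_sub, map_add, Algebra.TensorProduct.map_tmul,
            AlgHom.coe_id, id_eq, he1, he2, he1s, he2s, Algebra.TensorProduct.rid_tmul] <;> simp
      have m7 : (Algebra.TensorProduct.rid ℂ ℂ A)
          ((Algebra.TensorProduct.map (AlgHom.id ℂ A) counit₀.toAlgHom) (ΔR₀.toAlgHom (star (z 3)))) =
          AlgHom.id ℂ A (star (z 3)) := by
        simp only [AlgHom.coe_comp, Function.comp_apply, AlgEquiv.toAlgHom_eq_coe, AlgEquiv.coe_toAlgHom,
            AlgHom.coe_coe, StarAlgHom.coe_toAlgHom, hΔ0, hΔ1, hΔ2, hΔ3,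
            hΔs0, hΔs1, hΔs2, hΔs3, map_sub, map_add, Algebra.TensorProduct.map_tmul,
            AlgHom.coe_id, id_eq, he1, he2, he1s, he2s, Algebra.TensorProduct.rid_tmul] <;> simp
      exact extA _ _ (fun i => by fin_cases i <;> [exact m0; exact m1; exact m2; exact m3])
        (fun i => by fin_cases i <;> [exact m4; exact m5; exact m6; exact m7])
    intro a
    have hbr : ∀ x : A ⊗[ℂ] H, TensorProduct.rid ℂ A
        (TensorProduct.map LinearMap.id counit₀.toAlgHom.toLinearMap x) =
        Algebra.TensorProduct.rid ℂ ℂ A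
          (Algebra.TensorProduct.map (AlgHom.id ℂ A) counit₀.toAlgHom x) := by
      intro x
      refine x.induction_on ?_ (fun b c => ?_) (fun u v hu hv => ?_)
      · simp
      · simp [TensorProduct.rid_tmul, Algebra.TensorProduct.rid_tmul]
      · simp only [map_add, hu, hv]
    have := AlgHom.congr_fun hF a
    rw [hbr]
    simpa using this
end
end

section
/- Let ω: H → Ω¹_un(P) be a strong connection one-form on a Hopf–Galois extension B ⊂ P with H having invertible antipode, given by ω(h) = ℓ(h) − ε(h) 1⊗1 where ℓ: H → P⊗P satisfies ℓ(1)=1⊗1, χ̄(ℓ(h)) = 1⊗h, (ℓ⊗id)∘Δ = (id⊗Δ_R)∘ℓ and (id⊗ℓ)∘Δ = (Δ_L⊗id)∘ℓ. Then for every p ∈ P, δp + ω(S^{-1}p_{(1)}) p_{(0)} ∈ P·Ω¹_un(B), where δp = 1⊗p − p⊗1. -/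
open scoped TensorProduct
open TensorProduct LinearMap
set_option maxHeartbeats 1000000
set_option synthInstance.maxHeartbeats 400000

namespace Stmt15Aux

variable {H A : Type} [Ring H] [Algebra ℂ H] [Ring A] [Algebra ℂ A]

noncomputable def conv (Δ : H →ₗ[ℂ] H ⊗[ℂ] H) (f g : H →ₗ[ℂ] A) : H →ₗ[ℂ] A :=
  (LinearMap.mul' ℂ A) ∘ₗ (TensorProduct.map f g) ∘ₗ Δ

lemma conv_apply (Δ : H →ₗ[ℂ] H ⊗[ℂ] H) (f g : H →ₗ[ℂ] A) (h : H) :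
    conv Δ f g h = LinearMap.mul' ℂ A (TensorProduct.map f g (Δ h)) := rfl

noncomputable def cunit (ε : H →ₗ[ℂ] ℂ) : H →ₗ[ℂ] A := (Algebra.linearMap ℂ A) ∘ₗ ε

lemma conv_assoc (Δ : H →ₗ[ℂ] H ⊗[ℂ] H)
    (hco : ∀ h : H, (TensorProduct.assoc ℂ H H H) ((TensorProduct.map Δ LinearMap.id) (Δ h)) =
      (TensorProduct.map LinearMap.id Δ) (Δ h))
    (f g k : H →ₗ[ℂ] A) : conv Δ (conv Δ f g) k = conv Δ f (conv Δ g k) := by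
  ext h
  have e1 : TensorProduct.map (conv Δ f g) k
      = (TensorProduct.map ((LinearMap.mul' ℂ A) ∘ₗ TensorProduct.map f g) k) ∘ₗ
        (TensorProduct.map Δ LinearMap.id) := by
    rw [← TensorProduct.map_comp]; rfl
  have e2 : TensorProduct.map f (conv Δ g k)
      = (TensorProduct.map f ((LinearMap.mul' ℂ A) ∘ₗ TensorProduct.map g k)) ∘ₗ
        (TensorProduct.map LinearMap.id Δ) := by
    rw [← TensorProduct.map_comp]; rfl
  have key : ∀ w : (H ⊗[ℂ] H) ⊗[ℂ] H,
      LinearMap.mul' ℂ A ((TensorProduct.map ((LinearMap.mul' ℂ A) ∘ₗ TensorProduct.map f g) k) w)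
      = LinearMap.mul' ℂ A ((TensorProduct.map f ((LinearMap.mul' ℂ A) ∘ₗ TensorProduct.map g k))
          ((TensorProduct.assoc ℂ H H H) w)) := by
    intro w
    induction w using TensorProduct.induction_on with
    | zero => simp
    | add u v hu hv => simp [map_add, hu, hv]
    | tmul u c =>
      induction u using TensorProduct.induction_on with
      | zero => simp
      | add u1 u2 h1 h2 =>
        simp only [add_tmul, map_add, h1, h2]
      | tmul a b => simp [mul_assoc]
  calc conv Δ (conv Δ f g) k h
      = LinearMap.mul' ℂ A ((TensorProduct.map ((LinearMap.mul' ℂ A) ∘ₗ TensorProduct.map f g) k)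
          ((TensorProduct.map Δ LinearMap.id) (Δ h))) := by
        rw [conv_apply, e1]; rfl
    _ = LinearMap.mul' ℂ A ((TensorProduct.map f ((LinearMap.mul' ℂ A) ∘ₗ TensorProduct.map g k))
          ((TensorProduct.map LinearMap.id Δ) (Δ h))) := by rw [key, hco]
    _ = conv Δ f (conv Δ g k) h := by rw [conv_apply, e2]; rfl

lemma conv_cunit_right (Δ : H →ₗ[ℂ] H ⊗[ℂ] H) (ε : H →ₗ[ℂ] ℂ)
    (hcounitR : ∀ h : H, (TensorProduct.rid ℂ H)
      ((TensorProduct.map LinearMap.id ε) (Δ h)) = h)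
    (f : H →ₗ[ℂ] A) : conv Δ f (cunit ε) = f := by
  ext h
  have key : ∀ w : H ⊗[ℂ] H,
      LinearMap.mul' ℂ A (TensorProduct.map f (cunit (A := A) ε) w)
      = f ((TensorProduct.rid ℂ H) ((TensorProduct.map LinearMap.id ε) w)) := by
    intro w
    induction w using TensorProduct.induction_on with
    | zero => simp
    | add u v hu hv => simp [map_add, hu, hv]
    | tmul a b =>
      simp [cunit, Algebra.algebraMap_eq_smul_one, mul_smul_comm]
  rw [conv_apply, key, hcounitR]

lemma conv_cunit_left (Δ : H →ₗ[ℂ] H ⊗[ℂ] H) (ε : H →ₗ[ℂ] ℂ)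
    (hcounitL : ∀ h : H, (TensorProduct.lid ℂ H)
      ((TensorProduct.map ε LinearMap.id) (Δ h)) = h)
    (f : H →ₗ[ℂ] A) : conv Δ (cunit ε) f = f := by
  ext h
  have key : ∀ w : H ⊗[ℂ] H,
      LinearMap.mul' ℂ A (TensorProduct.map (cunit (A := A) ε) f w)
      = f ((TensorProduct.lid ℂ H) ((TensorProduct.map ε LinearMap.id) w)) := by
    intro w
    induction w using TensorProduct.induction_on with
    | zero => simp
    | add u v hu hv => simp [map_add, hu, hv]
    | tmul a b =>
      simp [cunit, Algebra.algebraMap_eq_smul_one, smul_mul_assoc]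
  rw [conv_apply, key, hcounitL]

lemma conv_inv_unique (Δ : H →ₗ[ℂ] H ⊗[ℂ] H) (ε : H →ₗ[ℂ] ℂ)
    (hco : ∀ h : H, (TensorProduct.assoc ℂ H H H) ((TensorProduct.map Δ LinearMap.id) (Δ h)) =
      (TensorProduct.map LinearMap.id Δ) (Δ h))
    (hcounitL : ∀ h : H, (TensorProduct.lid ℂ H)
      ((TensorProduct.map ε LinearMap.id) (Δ h)) = h)
    (hcounitR : ∀ h : H, (TensorProduct.rid ℂ H)
      ((TensorProduct.map LinearMap.id ε) (Δ h)) = h)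
    (f g k : H →ₗ[ℂ] A) (h1 : conv Δ f g = cunit ε) (h2 : conv Δ k f = cunit ε) :
    k = g := by
  have := conv_assoc Δ hco k f g
  rw [h2, h1, conv_cunit_left Δ ε hcounitL, conv_cunit_right Δ ε hcounitR] at this
  exact this.symm


section Hopf

variable (comul : H →ₐ[ℂ] H ⊗[ℂ] H) (counit : H →ₐ[ℂ] ℂ) (Santi Sinv : H →ₗ[ℂ] H)
variable (hS : ∀ h : H, Santi (Sinv h) = h ∧ Sinv (Santi h) = h)
variable (hcoassoc : ∀ h : H, (TensorProduct.assoc ℂ H H H)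
        ((TensorProduct.map comul.toLinearMap LinearMap.id) (comul h)) =
      (TensorProduct.map LinearMap.id comul.toLinearMap) (comul h))
variable (hcounitL : ∀ h : H, (TensorProduct.lid ℂ H)
        ((TensorProduct.map counit.toLinearMap LinearMap.id) (comul h)) = h)
variable (hcounitR : ∀ h : H, (TensorProduct.rid ℂ H)
        ((TensorProduct.map LinearMap.id counit.toLinearMap) (comul h)) = h)
variable (hantipode : ∀ h : H,
      (LinearMap.mul' ℂ H) ((TensorProduct.map Santi LinearMap.id) (comul h)) =
        algebraMap ℂ H (counit h) ∧
      (LinearMap.mul' ℂ H) ((TensorProduct.map LinearMap.id Santi) (comul h)) =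
        algebraMap ℂ H (counit h))

include hcounitR in
lemma counit_Santi (hantipode1 : ∀ h : H,
      (LinearMap.mul' ℂ H) ((TensorProduct.map Santi LinearMap.id) (comul h)) =
        algebraMap ℂ H (counit h)) :
    ∀ h : H, counit (Santi h) = counit h := by
  intro h
  have key : ∀ x : H ⊗[ℂ] H,
      counit (LinearMap.mul' ℂ H ((TensorProduct.map Santi LinearMap.id) x)) =
      counit (Santi ((TensorProduct.rid ℂ H)
        ((TensorProduct.map LinearMap.id counit.toLinearMap) x))) := by
    intro x
    induction x using TensorProduct.induction_on with
    | zero => simp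
    | add u v hu hv => simp [map_add, hu, hv]
    | tmul a b => simp [mul_comm]
  have h1 := congrArg counit (hantipode1 h)
  rw [key, hcounitR] at h1
  simpa using h1

include hS hcounitR hantipode in
lemma counit_Sinv : ∀ h : H, counit (Sinv h) = counit h := by
  intro h
  have := counit_Santi comul counit Santi hcounitR (fun h => (hantipode h).1) (Sinv h)
  rw [(hS h).1] at this
  exact this.symm

include hS hcoassoc hcounitL hcounitR hantipode in
lemma anticomul_inv :
    ∀ h : H, comul (Sinv h) =
      (TensorProduct.comm ℂ H H) ((TensorProduct.map Sinv Sinv) (comul h)) := by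
  classical
  set Δ := comul.toLinearMap with hΔ
  set ε := counit.toLinearMap with hε
  set G' : H ⊗[ℂ] H →ₗ[ℂ] H ⊗[ℂ] H :=
    (TensorProduct.map Santi Santi) ∘ₗ (TensorProduct.comm ℂ H H).toLinearMap with hG'
  set F : H →ₗ[ℂ] H ⊗[ℂ] H := Δ ∘ₗ Santi with hF
  set G : H →ₗ[ℂ] H ⊗[ℂ] H := G' ∘ₗ Δ with hG
  -- chosen representations of comul
  choose rep hrep using fun g : H => TensorProduct.exists_finset (R := ℂ) (comul g)
  -- sum forms of counit and antipode axioms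
  have s1 : ∀ d : H, ∑ n ∈ rep d, n.1 * Santi n.2 = algebraMap ℂ H (counit d) := by
    intro d
    have := (hantipode d).2
    rw [hrep d] at this
    simpa [map_sum] using this
  have s2 : ∀ d : H, ∑ m ∈ rep d, counit m.1 • m.2 = d := by
    intro d
    have := hcounitL d
    rw [hrep d] at this
    simpa [map_sum, hε] using this
  have claim1 : conv Δ F Δ = cunit ε := by
    ext h
    have multD : ∀ w : H ⊗[ℂ] H,
        LinearMap.mul' ℂ (H ⊗[ℂ] H) (TensorProduct.map Δ Δ w) = comul (LinearMap.mul' ℂ H w) := by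
      intro w
      induction w using TensorProduct.induction_on with
      | zero => simp
      | add u v hu hv => simp [map_add, hu, hv]
      | tmul a b => simp [hΔ]
    have e : TensorProduct.map F Δ =
        (TensorProduct.map Δ Δ) ∘ₗ (TensorProduct.map Santi LinearMap.id) := by
      rw [← TensorProduct.map_comp]; rfl
    rw [conv_apply, e]
    show LinearMap.mul' ℂ (H ⊗[ℂ] H)
      ((TensorProduct.map Δ Δ) ((TensorProduct.map Santi LinearMap.id) (Δ h))) = cunit ε h
    rw [multD, show (Δ h : H ⊗[ℂ] H) = comul h from rfl, (hantipode h).1]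
    simp [cunit, hε]
  have claim2 : conv Δ Δ G = cunit ε := by
    ext h
    -- inner collapse lemma
    have inner : ∀ c d : H,
        (∑ m ∈ rep d, ((c ⊗ₜ[ℂ] m.1 : H ⊗[ℂ] H) * G' (comul m.2))) =
          (c * Santi d) ⊗ₜ[ℂ] (1 : H) := by
      intro c d
      have Θdef : ∀ z : H ⊗[ℂ] (H ⊗[ℂ] H),
          (LinearMap.mul' ℂ (H ⊗[ℂ] H))
            ((TensorProduct.map ((TensorProduct.mk ℂ H H) c) G') z) =
          (LinearMap.mul' ℂ (H ⊗[ℂ] H))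
            ((TensorProduct.map ((TensorProduct.mk ℂ H H) c) G') z) := fun _ => rfl
      -- express LHS as Θ applied to (map id Δ)(Δ d)
      have lhs_eq : (∑ m ∈ rep d, ((c ⊗ₜ[ℂ] m.1 : H ⊗[ℂ] H) * G' (comul m.2))) =
          (LinearMap.mul' ℂ (H ⊗[ℂ] H))
            ((TensorProduct.map ((TensorProduct.mk ℂ H H) c) G')
              ((TensorProduct.map LinearMap.id Δ) (comul d))) := by
        rw [hrep d]
        simp only [map_sum, TensorProduct.map_tmul]
        rfl
      have co : (TensorProduct.map LinearMap.id Δ) (comul d) =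
          (TensorProduct.assoc ℂ H H H)
            ((TensorProduct.map comul.toLinearMap LinearMap.id) (comul d)) := (hcoassoc d).symm
      rw [lhs_eq, co, hrep d]
      have expand : (TensorProduct.map comul.toLinearMap LinearMap.id)
            (∑ m ∈ rep d, m.1 ⊗ₜ[ℂ] m.2) =
          ∑ m ∈ rep d, ∑ n ∈ rep m.1, (n.1 ⊗ₜ[ℂ] n.2) ⊗ₜ[ℂ] m.2 := by
        rw [map_sum]
        refine Finset.sum_congr rfl fun m _ => ?_
        rw [TensorProduct.map_tmul]
        rw [show (comul.toLinearMap m.1 : H ⊗[ℂ] H) = comul m.1 from rfl, hrep m.1]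
        simp [TensorProduct.sum_tmul]
      rw [expand]
      simp only [map_sum]
      have step : ∀ m : H × H, m ∈ rep d →
          (∑ n ∈ rep m.1, (LinearMap.mul' ℂ (H ⊗[ℂ] H))
            ((TensorProduct.map ((TensorProduct.mk ℂ H H) c) G')
              ((TensorProduct.assoc ℂ H H H) ((n.1 ⊗ₜ[ℂ] n.2) ⊗ₜ[ℂ] m.2)))) =
            counit m.1 • ((c * Santi m.2) ⊗ₜ[ℂ] (1 : H)) := by
        intro m _
        have term : ∀ n : H × H,
            (LinearMap.mul' ℂ (H ⊗[ℂ] H))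
              ((TensorProduct.map ((TensorProduct.mk ℂ H H) c) G')
                ((TensorProduct.assoc ℂ H H H) ((n.1 ⊗ₜ[ℂ] n.2) ⊗ₜ[ℂ] m.2))) =
            (c * Santi m.2) ⊗ₜ[ℂ] (n.1 * Santi n.2) := by
          intro n
          simp [hG', Algebra.TensorProduct.tmul_mul_tmul]
        rw [Finset.sum_congr rfl (fun n _ => term n)]
        rw [← TensorProduct.tmul_sum, s1 m.1]
        rw [Algebra.algebraMap_eq_smul_one]
        rw [TensorProduct.tmul_smul]
      rw [Finset.sum_congr rfl step]
      have : ∑ m ∈ rep d, counit m.1 • ((c * Santi m.2) ⊗ₜ[ℂ] (1 : H)) =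
          (c * Santi d) ⊗ₜ[ℂ] (1 : H) := by
        have lin : ∀ e : H, (c * Santi e) ⊗ₜ[ℂ] (1 : H) =
            ((TensorProduct.mk ℂ H H).flip 1 ∘ₗ (LinearMap.mulRight ℂ (1:H)).comp
              ((LinearMap.mulLeft ℂ c).comp Santi)) e := by
          intro e; simp
        calc ∑ m ∈ rep d, counit m.1 • ((c * Santi m.2) ⊗ₜ[ℂ] (1 : H))
            = ∑ m ∈ rep d, ((TensorProduct.mk ℂ H H).flip 1 ∘ₗ (LinearMap.mulRight ℂ (1:H)).comp
              ((LinearMap.mulLeft ℂ c).comp Santi)) (counit m.1 • m.2) := by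
              refine Finset.sum_congr rfl fun m _ => ?_
              rw [map_smul, ← lin m.2]
          _ = ((TensorProduct.mk ℂ H H).flip 1 ∘ₗ (LinearMap.mulRight ℂ (1:H)).comp
              ((LinearMap.mulLeft ℂ c).comp Santi)) (∑ m ∈ rep d, counit m.1 • m.2) := by
              rw [map_sum]
          _ = (c * Santi d) ⊗ₜ[ℂ] (1 : H) := by rw [s2 d, ← lin d]
      rw [this]
    -- main computation for claim2
    have e : TensorProduct.map Δ G =
        (TensorProduct.map LinearMap.id G') ∘ₗ (TensorProduct.map Δ Δ) := by
      rw [← TensorProduct.map_comp]; rfl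
    have mm : (TensorProduct.map Δ Δ) = (TensorProduct.map LinearMap.id Δ) ∘ₗ
        (TensorProduct.map Δ LinearMap.id) := by
      rw [← TensorProduct.map_comp, LinearMap.id_comp, LinearMap.comp_id]
    have co : (TensorProduct.map Δ LinearMap.id) (comul h) =
        (TensorProduct.assoc ℂ H H H).symm ((TensorProduct.map LinearMap.id Δ) (comul h)) := by
      rw [← hcoassoc h]
      exact (LinearEquiv.symm_apply_apply _ _).symm
    rw [conv_apply, e]
    show LinearMap.mul' ℂ (H ⊗[ℂ] H)
      ((TensorProduct.map LinearMap.id G') ((TensorProduct.map Δ Δ) (comul h))) = cunit ε h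
    rw [mm, LinearMap.comp_apply, co, hrep h]
    have expand2 : (TensorProduct.map LinearMap.id Δ) (∑ k ∈ rep h, k.1 ⊗ₜ[ℂ] k.2) =
        ∑ k ∈ rep h, ∑ m ∈ rep k.2, k.1 ⊗ₜ[ℂ] (m.1 ⊗ₜ[ℂ] m.2) := by
      rw [map_sum]
      refine Finset.sum_congr rfl fun k _ => ?_
      rw [TensorProduct.map_tmul]
      rw [show ((LinearMap.id : H →ₗ[ℂ] H) k.1 : H) = k.1 from rfl,
        show (Δ k.2 : H ⊗[ℂ] H) = comul k.2 from rfl, hrep k.2]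
      simp [TensorProduct.tmul_sum]
    rw [expand2]
    simp only [map_sum]
    have step2 : ∀ k : H × H, k ∈ rep h →
        (∑ m ∈ rep k.2,
          LinearMap.mul' ℂ (H ⊗[ℂ] H)
            ((TensorProduct.map LinearMap.id G')
              ((TensorProduct.map LinearMap.id Δ)
                ((TensorProduct.assoc ℂ H H H).symm (k.1 ⊗ₜ[ℂ] (m.1 ⊗ₜ[ℂ] m.2)))))) =
        (k.1 * Santi k.2) ⊗ₜ[ℂ] (1 : H) := by
      intro k _
      have : ∀ m : H × H,
          LinearMap.mul' ℂ (H ⊗[ℂ] H)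
            ((TensorProduct.map LinearMap.id G')
              ((TensorProduct.map LinearMap.id Δ)
                ((TensorProduct.assoc ℂ H H H).symm (k.1 ⊗ₜ[ℂ] (m.1 ⊗ₜ[ℂ] m.2))))) =
          (k.1 ⊗ₜ[ℂ] m.1 : H ⊗[ℂ] H) * G' (comul m.2) := by
        intro m
        rw [TensorProduct.assoc_symm_tmul]
        simp only [TensorProduct.map_tmul, LinearMap.id_coe, id_eq]
        rfl
      rw [Finset.sum_congr rfl (fun m _ => this m)]
      exact inner k.1 k.2
    rw [Finset.sum_congr rfl step2]
    have : ∑ k ∈ rep h, (k.1 * Santi k.2) ⊗ₜ[ℂ] (1 : H) =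
        (algebraMap ℂ H (counit h)) ⊗ₜ[ℂ] (1 : H) := by
      rw [← s1 h, TensorProduct.sum_tmul]
    rw [this]
    simp [cunit, hε, Algebra.algebraMap_eq_smul_one, Algebra.TensorProduct.one_def,
      TensorProduct.smul_tmul']
  -- conclude F = G
  have FG : F = G := by
    have assoc' := conv_assoc (A := H ⊗[ℂ] H) Δ hcoassoc F Δ G
    rw [claim1, claim2, conv_cunit_left Δ ε hcounitL, conv_cunit_right Δ ε hcounitR] at assoc'
    exact assoc'.symm
  -- derive statement for Sinv
  intro h
  have hFG : ∀ g : H, comul (Santi g) =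
      (TensorProduct.map Santi Santi) ((TensorProduct.comm ℂ H H) (comul g)) := by
    intro g
    have := congrFun (congrArg (fun f : H →ₗ[ℂ] H ⊗[ℂ] H => (f : H → H ⊗[ℂ] H)) FG) g
    simpa [hF, hG, hG', hΔ] using this
  have e := congrArg (TensorProduct.map Sinv Sinv) (hFG (Sinv h))
  rw [(hS h).1] at e
  have cancel : ∀ w : H ⊗[ℂ] H,
      (TensorProduct.map Sinv Sinv) ((TensorProduct.map Santi Santi) w) = w := by
    intro w
    induction w using TensorProduct.induction_on with
    | zero => simp
    | add u v hu hv => simp [map_add, hu, hv]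
    | tmul a b => simp [(hS a).2, (hS b).2]
  rw [cancel] at e
  have commcomm : ∀ w : H ⊗[ℂ] H,
      (TensorProduct.comm ℂ H H) ((TensorProduct.comm ℂ H H) w) = w := by
    intro w
    induction w using TensorProduct.induction_on with
    | zero => simp
    | add u v hu hv => simp [map_add, hu, hv]
    | tmul a b => simp
  have := congrArg (TensorProduct.comm ℂ H H) e
  rw [commcomm] at this
  exact this.symm

include hS hcoassoc hcounitL hcounitR hantipode in
lemma sinv_mul :
    ∀ h : H, (LinearMap.mul' ℂ H)
      ((TensorProduct.map Sinv LinearMap.id) ((TensorProduct.comm ℂ H H) (comul h))) =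
      algebraMap ℂ H (counit h) := by
  intro h
  have h2 := (hantipode (Sinv h)).2
  rw [counit_Sinv comul counit Santi Sinv hS hcounitR hantipode h] at h2
  rw [anticomul_inv comul counit Santi Sinv hS hcoassoc hcounitL hcounitR hantipode h] at h2
  have key : ∀ w : H ⊗[ℂ] H,
      (LinearMap.mul' ℂ H) ((TensorProduct.map LinearMap.id Santi)
        ((TensorProduct.comm ℂ H H) ((TensorProduct.map Sinv Sinv) w))) =
      (LinearMap.mul' ℂ H) ((TensorProduct.map Sinv LinearMap.id)
        ((TensorProduct.comm ℂ H H) w)) := by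
    intro w
    induction w using TensorProduct.induction_on with
    | zero => simp
    | add u v hu hv => simp [map_add, hu, hv]
    | tmul a b => simp [(hS a).1]
  rw [key] at h2
  exact h2

end Hopf
end Stmt15Aux


open scoped TensorProduct

/-- For a strong connection one-form ω(h) = ℓ(h) − ε(h)1⊗1 on a Hopf–Galois
extension B ⊂ P with H having invertible antipode, for every p ∈ P one has
δp + ω(S⁻¹p_{(1)}) p_{(0)} ∈ P·Ω¹_un(B), where δp = 1⊗p − p⊗1. -/
theorem stmt15 (H : Type) [Ring H] [Algebra ℂ H]
    (P : Type) [Ring P] [Algebra ℂ P]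
    -- Hopf algebra structure on H
    (comul : H →ₐ[ℂ] H ⊗[ℂ] H) (counit : H →ₐ[ℂ] ℂ) (Santi Sinv : H →ₗ[ℂ] H)
    (hS : ∀ h : H, Santi (Sinv h) = h ∧ Sinv (Santi h) = h)
    (hcoassoc : ∀ h : H, (TensorProduct.assoc ℂ H H H)
        ((TensorProduct.map comul.toLinearMap LinearMap.id) (comul h)) =
      (TensorProduct.map LinearMap.id comul.toLinearMap) (comul h))
    (hcounitL : ∀ h : H, (TensorProduct.lid ℂ H)
        ((TensorProduct.map counit.toLinearMap LinearMap.id) (comul h)) = h)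
    (hcounitR : ∀ h : H, (TensorProduct.rid ℂ H)
        ((TensorProduct.map LinearMap.id counit.toLinearMap) (comul h)) = h)
    (hantipode : ∀ h : H,
      (LinearMap.mul' ℂ H) ((TensorProduct.map Santi LinearMap.id) (comul h)) =
        algebraMap ℂ H (counit h) ∧
      (LinearMap.mul' ℂ H) ((TensorProduct.map LinearMap.id Santi) (comul h)) =
        algebraMap ℂ H (counit h))
    -- the comodule-algebra structure on P
    (ΔR : P →ₐ[ℂ] P ⊗[ℂ] H)
    (hcoassocP : ∀ p : P, (TensorProduct.assoc ℂ P H H)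
        ((TensorProduct.map ΔR.toLinearMap LinearMap.id) (ΔR p)) =
      (TensorProduct.map LinearMap.id comul.toLinearMap) (ΔR p))
    (hcounitP : ∀ p : P,
      (TensorProduct.rid ℂ P) ((TensorProduct.map LinearMap.id counit.toLinearMap) (ΔR p)) = p)
    -- the coinvariant subalgebra B
    (Bset : Set P) (hBset : Bset = {b : P | ΔR b = b ⊗ₜ[ℂ] 1})
    -- the (lifted) canonical map and the Hopf–Galois condition
    (χbar : P ⊗[ℂ] P →ₗ[ℂ] P ⊗[ℂ] H)
    (hχbar : χbar =
      (LinearMap.mul' ℂ (P ⊗[ℂ] H)) ∘ₗ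
      (TensorProduct.map (Algebra.TensorProduct.includeLeft :
          P →ₐ[ℂ] P ⊗[ℂ] H).toLinearMap LinearMap.id) ∘ₗ
      (TensorProduct.map LinearMap.id ΔR.toLinearMap))
    (hGaloisSurj : Function.Surjective χbar)
    (hGaloisKer : LinearMap.ker χbar = Submodule.span ℂ
      {x : P ⊗[ℂ] P | ∃ p p' b : P, b ∈ Bset ∧ x = (p * b) ⊗ₜ[ℂ] p' - p ⊗ₜ[ℂ] (b * p')})
    -- the strong connection data ℓ and its properties
    (ℓ : H →ₗ[ℂ] P ⊗[ℂ] P)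
    (hℓone : ℓ 1 = (1 : P) ⊗ₜ[ℂ] (1 : P))
    (hℓχ : ∀ h : H, χbar (ℓ h) = 1 ⊗ₜ[ℂ] h)
    (hℓR : ∀ h : H, (TensorProduct.assoc ℂ P P H)
        ((TensorProduct.map ℓ LinearMap.id) (comul h)) =
      (TensorProduct.map LinearMap.id ΔR.toLinearMap) (ℓ h))
    (ΔL : P →ₗ[ℂ] H ⊗[ℂ] P)
    (hΔL : ΔL = (TensorProduct.map Sinv LinearMap.id) ∘ₗ
      (TensorProduct.comm ℂ P H).toLinearMap ∘ₗ ΔR.toLinearMap)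
    (hℓL : ∀ h : H, (TensorProduct.assoc ℂ H P P)
        ((TensorProduct.map ΔL LinearMap.id) (ℓ h)) =
      (TensorProduct.map LinearMap.id ℓ) (comul h))
    -- the connection one-form ω(h) = ℓ(h) − ε(h) 1⊗1
    (ω : H →ₗ[ℂ] P ⊗[ℂ] P)
    (hω : ω = ℓ - (counit.toLinearMap.smulRight ((1 : P) ⊗ₜ[ℂ] (1 : P))))
    -- the map p ↦ ω(S⁻¹p_{(1)}) p_{(0)}
    (Ψ : P →ₗ[ℂ] P ⊗[ℂ] P)
    (hΨ : Ψ = (LinearMap.mul' ℂ (P ⊗[ℂ] P)) ∘ₗ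
      (TensorProduct.map (ω ∘ₗ Sinv)
        (Algebra.TensorProduct.includeRight : P →ₐ[ℂ] P ⊗[ℂ] P).toLinearMap) ∘ₗ
      (TensorProduct.comm ℂ P H).toLinearMap ∘ₗ ΔR.toLinearMap) :
    ∀ p : P,
      ((1 : P) ⊗ₜ[ℂ] p - p ⊗ₜ[ℂ] (1 : P)) + Ψ p ∈
        Submodule.span ℂ {x : P ⊗[ℂ] P | ∃ q : P, ∃ b b' : P, b ∈ Bset ∧ b' ∈ Bset ∧
          x = (q ⊗ₜ[ℂ] (1 : P)) * (b ⊗ₜ[ℂ] b' - (b * b') ⊗ₜ[ℂ] (1 : P))} := by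
  classical
  intro p
  -- Hopf algebra consequences
  have hεS' : ∀ h : H, counit (Sinv h) = counit h :=
    Stmt15Aux.counit_Sinv comul counit Santi Sinv hS hcounitR hantipode
  have hAC : ∀ h : H, comul (Sinv h) =
      (TensorProduct.comm ℂ H H) ((TensorProduct.map Sinv Sinv) (comul h)) :=
    Stmt15Aux.anticomul_inv comul counit Santi Sinv hS hcoassoc hcounitL hcounitR hantipode
  have hC : ∀ h : H, (LinearMap.mul' ℂ H)
      ((TensorProduct.map Sinv LinearMap.id) ((TensorProduct.comm ℂ H H) (comul h))) =
      algebraMap ℂ H (counit h) :=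
    Stmt15Aux.sinv_mul comul counit Santi Sinv hS hcoassoc hcounitL hcounitR hantipode
  -- chosen representations
  choose repP hrepP using fun q : P => TensorProduct.exists_finset (R := ℂ) (ΔR q)
  choose repH hrepH using fun g : H => TensorProduct.exists_finset (R := ℂ) (comul g)
  -- sum forms
  have sC : ∀ g : H, ∑ n ∈ repH g, Sinv n.2 * n.1 = algebraMap ℂ H (counit g) := by
    intro g
    have := hC g
    rw [hrepH g] at this
    simpa [map_sum] using this
  have sEpsH : ∀ g : H, ∑ n ∈ repH g, counit n.1 • n.2 = g := by
    intro g
    have := hcounitL g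
    rw [hrepH g] at this
    simpa [map_sum] using this
  have sEpsP : ∀ q : P, ∑ j ∈ repP q, counit j.2 • j.1 = q := by
    intro q
    have := hcounitP q
    rw [hrepP q] at this
    simpa [map_sum] using this
  -- Step A : rewrite Ψ p
  have stepA : Ψ p = (∑ i ∈ repP p, ℓ (Sinv i.2) * ((1:P) ⊗ₜ[ℂ] i.1)) - (1:P) ⊗ₜ[ℂ] p := by
    have e1 : Ψ p = ∑ i ∈ repP p, ω (Sinv i.2) * ((1:P) ⊗ₜ[ℂ] i.1) := by
      rw [hΨ]
      show (LinearMap.mul' ℂ (P ⊗[ℂ] P))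
        ((TensorProduct.map (ω ∘ₗ Sinv)
          (Algebra.TensorProduct.includeRight : P →ₐ[ℂ] P ⊗[ℂ] P).toLinearMap)
          ((TensorProduct.comm ℂ P H) (ΔR p))) = _
      rw [hrepP p]
      simp [map_sum]
    have e2 : ∀ i : P × H, ω (Sinv i.2) * ((1:P) ⊗ₜ[ℂ] i.1) =
        ℓ (Sinv i.2) * ((1:P) ⊗ₜ[ℂ] i.1) - counit i.2 • ((1:P) ⊗ₜ[ℂ] i.1) := by
      intro i
      rw [hω]
      have hε' : (counit.toLinearMap (Sinv i.2)) = counit i.2 := hεS' i.2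
      simp only [LinearMap.sub_apply, LinearMap.smulRight_apply, sub_mul]
      rw [hε', smul_mul_assoc, Algebra.TensorProduct.tmul_mul_tmul, one_mul, one_mul]
    rw [e1, Finset.sum_congr rfl (fun i _ => e2 i), Finset.sum_sub_distrib]
    congr 1
    have : ∑ i ∈ repP p, counit i.2 • ((1:P) ⊗ₜ[ℂ] i.1) = (1:P) ⊗ₜ[ℂ] p := by
      conv_rhs => rw [← sEpsP p]
      rw [TensorProduct.tmul_sum]
      exact Finset.sum_congr rfl fun i _ => (TensorProduct.tmul_smul _ _ _).symm
    exact this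
  set Φ' : P ⊗[ℂ] P := ∑ i ∈ repP p, ℓ (Sinv i.2) * ((1:P) ⊗ₜ[ℂ] i.1) with hΦ'
  have ht : ((1 : P) ⊗ₜ[ℂ] p - p ⊗ₜ[ℂ] (1 : P)) + Ψ p = Φ' - p ⊗ₜ[ℂ] (1:P) := by
    rw [stepA]; abel
  rw [ht]
  -- Step B : multiplication of Φ'
  have keyχ : ∀ z : P ⊗[ℂ] P, LinearMap.mul' ℂ P z =
      (TensorProduct.rid ℂ P) ((TensorProduct.map LinearMap.id counit.toLinearMap) (χbar z)) := by
    intro z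
    induction z using TensorProduct.induction_on with
    | zero => simp
    | add u v hu hv => simp [map_add, hu, hv]
    | tmul q q' =>
      rw [hχbar]
      show LinearMap.mul' ℂ P (q ⊗ₜ[ℂ] q') = (TensorProduct.rid ℂ P)
        ((TensorProduct.map LinearMap.id counit.toLinearMap)
          ((LinearMap.mul' ℂ (P ⊗[ℂ] H))
            ((TensorProduct.map (Algebra.TensorProduct.includeLeft :
                P →ₐ[ℂ] P ⊗[ℂ] H).toLinearMap LinearMap.id)
              ((TensorProduct.map LinearMap.id ΔR.toLinearMap) (q ⊗ₜ[ℂ] q')))))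
      have e : (TensorProduct.map (Algebra.TensorProduct.includeLeft :
            P →ₐ[ℂ] P ⊗[ℂ] H).toLinearMap LinearMap.id)
          ((TensorProduct.map LinearMap.id ΔR.toLinearMap) (q ⊗ₜ[ℂ] q')) =
          (q ⊗ₜ[ℂ] (1:H)) ⊗ₜ[ℂ] (ΔR q') := by
        simp
      rw [e]
      have sub : ∀ w : P ⊗[ℂ] H,
          (TensorProduct.rid ℂ P) ((TensorProduct.map LinearMap.id counit.toLinearMap)
            ((LinearMap.mul' ℂ (P ⊗[ℂ] H)) ((q ⊗ₜ[ℂ] (1:H)) ⊗ₜ[ℂ] w))) =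
          q * (TensorProduct.rid ℂ P)
            ((TensorProduct.map LinearMap.id counit.toLinearMap) w) := by
        intro w
        induction w using TensorProduct.induction_on with
        | zero => simp
        | add u v hu hv => simp only [TensorProduct.tmul_add, map_add, hu, hv, mul_add]
        | tmul a b =>
          simp [Algebra.TensorProduct.tmul_mul_tmul, mul_smul_comm]
      rw [sub, hcounitP q']
      simp
  have mℓ : ∀ h : H, LinearMap.mul' ℂ P (ℓ h) = algebraMap ℂ P (counit h) := by
    intro h
    rw [keyχ, hℓχ h]
    simp [Algebra.algebraMap_eq_smul_one]
  have a1 : ∀ (z : P ⊗[ℂ] P) (q : P),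
      LinearMap.mul' ℂ P (z * ((1:P) ⊗ₜ[ℂ] q)) = LinearMap.mul' ℂ P z * q := by
    intro z q
    induction z using TensorProduct.induction_on with
    | zero => simp
    | add u v hu hv => simp [add_mul, map_add, hu, hv]
    | tmul a b =>
      rw [Algebra.TensorProduct.tmul_mul_tmul]
      simp [mul_assoc]
  have hmulΦ : LinearMap.mul' ℂ P Φ' = p := by
    rw [hΦ', map_sum]
    have : ∀ i : P × H, LinearMap.mul' ℂ P (ℓ (Sinv i.2) * ((1:P) ⊗ₜ[ℂ] i.1)) =
        counit i.2 • i.1 := by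
      intro i
      rw [a1, mℓ, hεS' i.2, ← Algebra.smul_def]
    rw [Finset.sum_congr rfl (fun i _ => this i), sEpsP p]
  -- Step C : coinvariance of the second leg
  set ι : P →ₗ[ℂ] P ⊗[ℂ] H := (TensorProduct.mk ℂ P H).flip 1 with hι
  set D : P →ₗ[ℂ] P ⊗[ℂ] H := ΔR.toLinearMap - ι with hD
  set R1 : P ⊗[ℂ] P →ₐ[ℂ] P ⊗[ℂ] (P ⊗[ℂ] H) :=
    Algebra.TensorProduct.map (AlgHom.id ℂ P) ΔR with hR1
  set J : P ⊗[ℂ] P →ₐ[ℂ] P ⊗[ℂ] (P ⊗[ℂ] H) :=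
    Algebra.TensorProduct.map (AlgHom.id ℂ P)
      (Algebra.TensorProduct.includeLeft : P →ₐ[ℂ] P ⊗[ℂ] H) with hJdef
  set Fm : H ⊗[ℂ] H →ₗ[ℂ] P ⊗[ℂ] (P ⊗[ℂ] H) :=
    (TensorProduct.assoc ℂ P P H).toLinearMap ∘ₗ
      (TensorProduct.map (ℓ ∘ₗ Sinv) Sinv) ∘ₗ (TensorProduct.comm ℂ H H).toLinearMap with hFm
  have I3 : ∀ (z : P ⊗[ℂ] P) (d : H) (x : P) (b : H),
      ((TensorProduct.assoc ℂ P P H) (z ⊗ₜ[ℂ] d)) * ((1:P) ⊗ₜ[ℂ] (x ⊗ₜ[ℂ] b)) =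
      (TensorProduct.assoc ℂ P P H)
        (((TensorProduct.map LinearMap.id (LinearMap.mulRight ℂ x)) z) ⊗ₜ[ℂ] (d * b)) := by
    intro z d x b
    induction z using TensorProduct.induction_on with
    | zero => simp
    | add u v hu hv => simp only [TensorProduct.add_tmul, map_add, add_mul, hu, hv]
    | tmul e f => simp [Algebra.TensorProduct.tmul_mul_tmul]
  have I4 : ∀ (z : P ⊗[ℂ] P) (x : P),
      (J z) * ((1:P) ⊗ₜ[ℂ] (x ⊗ₜ[ℂ] (1:H))) =
      (TensorProduct.assoc ℂ P P H)
        (((TensorProduct.map LinearMap.id (LinearMap.mulRight ℂ x)) z) ⊗ₜ[ℂ] (1:H)) := by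
    intro z x
    induction z using TensorProduct.induction_on with
    | zero => simp
    | add u v hu hv => simp only [map_add, TensorProduct.add_tmul, add_mul, hu, hv]
    | tmul e f =>
      rw [hJdef]
      simp [Algebra.TensorProduct.tmul_mul_tmul]
  have hmapR1 : ∀ z : P ⊗[ℂ] P,
      (TensorProduct.map LinearMap.id ΔR.toLinearMap) z = R1 z := by
    intro z
    induction z using TensorProduct.induction_on with
    | zero => simp
    | add u v hu hv => simp [map_add, hu, hv]
    | tmul a b => simp [hR1]
  have hR1F : ∀ h : H, R1 (ℓ (Sinv h)) = Fm (comul h) := by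
    intro h
    rw [← hmapR1, ← hℓR (Sinv h), hAC h]
    generalize comul h = w
    induction w using TensorProduct.induction_on with
    | zero => simp
    | add u v hu hv => simp [map_add, hu, hv]
    | tmul a b => simp [hFm]
  -- coassociativity in sum form, transported
  have C1 : (∑ i ∈ repP p, ∑ j ∈ repP i.1, j.1 ⊗ₜ[ℂ] (j.2 ⊗ₜ[ℂ] i.2)) =
      (∑ i ∈ repP p, ∑ k ∈ repH i.2, i.1 ⊗ₜ[ℂ] (k.1 ⊗ₜ[ℂ] k.2)) := by
    have hco := hcoassocP p
    rw [hrepP p] at hco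
    have lhs : (TensorProduct.map ΔR.toLinearMap LinearMap.id)
        (∑ i ∈ repP p, i.1 ⊗ₜ[ℂ] i.2) = ∑ i ∈ repP p, ∑ j ∈ repP i.1,
          (j.1 ⊗ₜ[ℂ] j.2) ⊗ₜ[ℂ] i.2 := by
      rw [map_sum]
      refine Finset.sum_congr rfl fun i _ => ?_
      rw [TensorProduct.map_tmul]
      rw [show (ΔR.toLinearMap i.1 : P ⊗[ℂ] H) = ΔR i.1 from rfl, hrepP i.1]
      simp [TensorProduct.sum_tmul]
    have rhs : (TensorProduct.map LinearMap.id comul.toLinearMap)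
        (∑ i ∈ repP p, i.1 ⊗ₜ[ℂ] i.2) = ∑ i ∈ repP p, ∑ k ∈ repH i.2,
          i.1 ⊗ₜ[ℂ] (k.1 ⊗ₜ[ℂ] k.2) := by
      rw [map_sum]
      refine Finset.sum_congr rfl fun i _ => ?_
      rw [TensorProduct.map_tmul]
      rw [show (comul.toLinearMap i.2 : H ⊗[ℂ] H) = comul i.2 from rfl, hrepH i.2]
      simp [TensorProduct.tmul_sum]
    rw [lhs, rhs] at hco
    rw [← hco]
    simp only [map_sum]
    exact Finset.sum_congr rfl fun i _ => Finset.sum_congr rfl fun j _ => by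
      rw [TensorProduct.assoc_tmul]
  -- transport C1 with Ξ
  set Ξ : P ⊗[ℂ] (H ⊗[ℂ] H) →ₗ[ℂ] (H ⊗[ℂ] H) ⊗[ℂ] (P ⊗[ℂ] H) :=
    (TensorProduct.map comul.toLinearMap LinearMap.id) ∘ₗ
      (TensorProduct.comm ℂ (P ⊗[ℂ] H) H).toLinearMap ∘ₗ
      (TensorProduct.assoc ℂ P H H).symm.toLinearMap with hΞ
  have W2 : (∑ i ∈ repP p, ∑ j ∈ repP i.1, (comul i.2) ⊗ₜ[ℂ] (j.1 ⊗ₜ[ℂ] j.2)) =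
      (∑ i ∈ repP p, ∑ k ∈ repH i.2, (comul k.2) ⊗ₜ[ℂ] (i.1 ⊗ₜ[ℂ] k.1)) := by
    have := congrArg Ξ C1
    simp only [map_sum] at this
    have eΞ : ∀ (a : P) (u v : H), Ξ (a ⊗ₜ[ℂ] (u ⊗ₜ[ℂ] v)) =
        (comul v) ⊗ₜ[ℂ] (a ⊗ₜ[ℂ] u) := by
      intro a u v
      rw [hΞ]
      simp
    calc (∑ i ∈ repP p, ∑ j ∈ repP i.1, (comul i.2) ⊗ₜ[ℂ] (j.1 ⊗ₜ[ℂ] j.2))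
        = ∑ i ∈ repP p, ∑ j ∈ repP i.1, Ξ (j.1 ⊗ₜ[ℂ] (j.2 ⊗ₜ[ℂ] i.2)) := by
          exact Finset.sum_congr rfl fun i _ => Finset.sum_congr rfl fun j _ => (eΞ _ _ _).symm
      _ = ∑ i ∈ repP p, ∑ k ∈ repH i.2, Ξ (i.1 ⊗ₜ[ℂ] (k.1 ⊗ₜ[ℂ] k.2)) := this
      _ = ∑ i ∈ repP p, ∑ k ∈ repH i.2, (comul k.2) ⊗ₜ[ℂ] (i.1 ⊗ₜ[ℂ] k.1) := by
          exact Finset.sum_congr rfl fun i _ => Finset.sum_congr rfl fun k _ => eΞ _ _ _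
  -- inner collapse
  have innerP : ∀ (x : P) (g : H),
      (∑ k ∈ repH g, Fm (comul k.2) * ((1:P) ⊗ₜ[ℂ] (x ⊗ₜ[ℂ] k.1))) =
      (TensorProduct.assoc ℂ P P H)
        (((TensorProduct.map LinearMap.id (LinearMap.mulRight ℂ x)) (ℓ (Sinv g)))
          ⊗ₜ[ℂ] (1:H)) := by
    intro x g
    set Gx : H →ₗ[ℂ] P ⊗[ℂ] (P ⊗[ℂ] H) :=
      ((TensorProduct.mk ℂ P (P ⊗[ℂ] H)) 1) ∘ₗ ((TensorProduct.mk ℂ P H) x) with hGx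
    set Θ : H ⊗[ℂ] (H ⊗[ℂ] H) →ₗ[ℂ] P ⊗[ℂ] (P ⊗[ℂ] H) :=
      (LinearMap.mul' ℂ (P ⊗[ℂ] (P ⊗[ℂ] H))) ∘ₗ (TensorProduct.map Fm Gx) ∘ₗ
        (TensorProduct.comm ℂ H (H ⊗[ℂ] H)).toLinearMap with hΘ
    have eΘ : ∀ (c : H) (w : H ⊗[ℂ] H), Θ (c ⊗ₜ[ℂ] w) =
        Fm w * ((1:P) ⊗ₜ[ℂ] (x ⊗ₜ[ℂ] c)) := by
      intro c w
      rw [hΘ]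
      simp [hGx]
    have e1 : (∑ k ∈ repH g, Fm (comul k.2) * ((1:P) ⊗ₜ[ℂ] (x ⊗ₜ[ℂ] k.1))) =
        Θ ((TensorProduct.map LinearMap.id comul.toLinearMap) (comul g)) := by
      rw [hrepH g, map_sum, map_sum]
      refine Finset.sum_congr rfl fun k _ => ?_
      rw [TensorProduct.map_tmul, eΘ]
      rfl
    have e2 : (TensorProduct.map LinearMap.id comul.toLinearMap) (comul g) =
        (TensorProduct.assoc ℂ H H H)
          ((TensorProduct.map comul.toLinearMap LinearMap.id) (comul g)) := (hcoassoc g).symm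
    rw [e1, e2, hrepH g]
    have expand : (TensorProduct.map comul.toLinearMap LinearMap.id)
        (∑ k ∈ repH g, k.1 ⊗ₜ[ℂ] k.2) =
        ∑ k ∈ repH g, ∑ n ∈ repH k.1, (n.1 ⊗ₜ[ℂ] n.2) ⊗ₜ[ℂ] k.2 := by
      rw [map_sum]
      refine Finset.sum_congr rfl fun k _ => ?_
      rw [TensorProduct.map_tmul]
      rw [show (comul.toLinearMap k.1 : H ⊗[ℂ] H) = comul k.1 from rfl, hrepH k.1]
      simp [TensorProduct.sum_tmul]
    rw [expand]
    simp only [map_sum]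
    have step : ∀ k : H × H, k ∈ repH g →
        (∑ n ∈ repH k.1, Θ ((TensorProduct.assoc ℂ H H H) ((n.1 ⊗ₜ[ℂ] n.2) ⊗ₜ[ℂ] k.2))) =
        counit k.1 • (TensorProduct.assoc ℂ P P H)
          (((TensorProduct.map LinearMap.id (LinearMap.mulRight ℂ x)) (ℓ (Sinv k.2)))
            ⊗ₜ[ℂ] (1:H)) := by
      intro k _
      have term : ∀ n : H × H,
          Θ ((TensorProduct.assoc ℂ H H H) ((n.1 ⊗ₜ[ℂ] n.2) ⊗ₜ[ℂ] k.2)) =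
          (TensorProduct.assoc ℂ P P H)
            (((TensorProduct.map LinearMap.id (LinearMap.mulRight ℂ x)) (ℓ (Sinv k.2)))
              ⊗ₜ[ℂ] (Sinv n.2 * n.1)) := by
        intro n
        rw [TensorProduct.assoc_tmul, eΘ]
        have : Fm (n.2 ⊗ₜ[ℂ] k.2) =
            (TensorProduct.assoc ℂ P P H) ((ℓ (Sinv k.2)) ⊗ₜ[ℂ] (Sinv n.2)) := by
          rw [hFm]; simp
        rw [this, I3]
      rw [Finset.sum_congr rfl (fun n _ => term n)]
      rw [← map_sum, ← TensorProduct.tmul_sum, sC k.1]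
      rw [Algebra.algebraMap_eq_smul_one, TensorProduct.tmul_smul, map_smul]
    rw [Finset.sum_congr rfl step]
    -- final recombination over k
    set Lm : H →ₗ[ℂ] P ⊗[ℂ] (P ⊗[ℂ] H) :=
      (TensorProduct.assoc ℂ P P H).toLinearMap ∘ₗ
        ((TensorProduct.mk ℂ (P ⊗[ℂ] P) H).flip 1) ∘ₗ
        (TensorProduct.map LinearMap.id (LinearMap.mulRight ℂ x)) ∘ₗ ℓ ∘ₗ Sinv with hLm
    have eLm : ∀ e : H, (TensorProduct.assoc ℂ P P H)
        (((TensorProduct.map LinearMap.id (LinearMap.mulRight ℂ x)) (ℓ (Sinv e)))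
          ⊗ₜ[ℂ] (1:H)) = Lm e := by
      intro e; rw [hLm]; rfl
    calc ∑ k ∈ repH g, counit k.1 • (TensorProduct.assoc ℂ P P H)
          (((TensorProduct.map LinearMap.id (LinearMap.mulRight ℂ x)) (ℓ (Sinv k.2)))
            ⊗ₜ[ℂ] (1:H))
        = ∑ k ∈ repH g, Lm (counit k.1 • k.2) := by
          refine Finset.sum_congr rfl fun k _ => ?_
          rw [map_smul, eLm]
      _ = Lm (∑ k ∈ repH g, counit k.1 • k.2) := by rw [map_sum]
      _ = _ := by rw [sEpsH g, ← eLm]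
  -- main computation : R1 Φ' = J Φ'
  have main : R1 Φ' = J Φ' := by
    have claimL : R1 Φ' = ∑ i ∈ repP p, ∑ j ∈ repP i.1,
        Fm (comul i.2) * ((1:P) ⊗ₜ[ℂ] (j.1 ⊗ₜ[ℂ] j.2)) := by
      rw [hΦ', map_sum]
      refine Finset.sum_congr rfl fun i _ => ?_
      rw [map_mul, hR1F i.2]
      have : R1 ((1:P) ⊗ₜ[ℂ] i.1) = (1:P) ⊗ₜ[ℂ] (ΔR i.1) := by
        rw [hR1]; simp
      rw [this, hrepP i.1, TensorProduct.tmul_sum, Finset.mul_sum]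
    have claimR : J Φ' = ∑ i ∈ repP p,
        (TensorProduct.assoc ℂ P P H)
          (((TensorProduct.map LinearMap.id (LinearMap.mulRight ℂ i.1)) (ℓ (Sinv i.2)))
            ⊗ₜ[ℂ] (1:H)) := by
      rw [hΦ', map_sum]
      refine Finset.sum_congr rfl fun i _ => ?_
      rw [map_mul]
      have : J ((1:P) ⊗ₜ[ℂ] i.1) = (1:P) ⊗ₜ[ℂ] (i.1 ⊗ₜ[ℂ] (1:H)) := by
        rw [hJdef]; simp
      rw [this, I4]
    rw [claimL, claimR]
    have mid : (∑ i ∈ repP p, ∑ j ∈ repP i.1,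
        Fm (comul i.2) * ((1:P) ⊗ₜ[ℂ] (j.1 ⊗ₜ[ℂ] j.2))) =
        ∑ i ∈ repP p, ∑ k ∈ repH i.2,
        Fm (comul k.2) * ((1:P) ⊗ₜ[ℂ] (i.1 ⊗ₜ[ℂ] k.1)) := by
      set Λ : (H ⊗[ℂ] H) ⊗[ℂ] (P ⊗[ℂ] H) →ₗ[ℂ] P ⊗[ℂ] (P ⊗[ℂ] H) :=
        (LinearMap.mul' ℂ (P ⊗[ℂ] (P ⊗[ℂ] H))) ∘ₗ
          (TensorProduct.map Fm ((TensorProduct.mk ℂ P (P ⊗[ℂ] H)) 1)) with hΛ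
      have eΛ : ∀ (w : H ⊗[ℂ] H) (v : P ⊗[ℂ] H),
          Λ (w ⊗ₜ[ℂ] v) = Fm w * ((1:P) ⊗ₜ[ℂ] v) := by
        intro w v; rw [hΛ]; simp
      have := congrArg Λ W2
      simp only [map_sum] at this
      calc (∑ i ∈ repP p, ∑ j ∈ repP i.1,
          Fm (comul i.2) * ((1:P) ⊗ₜ[ℂ] (j.1 ⊗ₜ[ℂ] j.2)))
          = ∑ i ∈ repP p, ∑ j ∈ repP i.1, Λ ((comul i.2) ⊗ₜ[ℂ] (j.1 ⊗ₜ[ℂ] j.2)) := by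
            exact Finset.sum_congr rfl fun i _ => Finset.sum_congr rfl fun j _ =>
              (eΛ _ _).symm
        _ = ∑ i ∈ repP p, ∑ k ∈ repH i.2, Λ ((comul k.2) ⊗ₜ[ℂ] (i.1 ⊗ₜ[ℂ] k.1)) := this
        _ = _ := Finset.sum_congr rfl fun i _ => Finset.sum_congr rfl fun k _ => eΛ _ _
    rw [mid]
    exact Finset.sum_congr rfl fun i _ => innerP i.1 i.2
  -- Step D : exactness and conclusion
  have lTD : ∀ z : P ⊗[ℂ] P, (LinearMap.lTensor P D) z = R1 z - J z := by
    intro z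
    induction z using TensorProduct.induction_on with
    | zero => simp
    | add u v hu hv =>
      rw [map_add, map_add, map_add, hu, hv]
      abel
    | tmul a b =>
      rw [LinearMap.lTensor_tmul, hD, LinearMap.sub_apply, TensorProduct.tmul_sub]
      rw [hR1, hJdef]
      simp [hι]
  have hDt : (LinearMap.lTensor P D) (Φ' - p ⊗ₜ[ℂ] (1:P)) = 0 := by
    rw [map_sub, lTD, lTD, main]
    have e1 : R1 (p ⊗ₜ[ℂ] (1:P)) = p ⊗ₜ[ℂ] (1 : P ⊗[ℂ] H) := by
      rw [hR1]; simp
    have e2 : J (p ⊗ₜ[ℂ] (1:P)) = p ⊗ₜ[ℂ] (1 : P ⊗[ℂ] H) := by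
      rw [hJdef]
      simp [Algebra.TensorProduct.one_def]
    rw [e1, e2]
    abel
  have hex := Module.Flat.lTensor_exact (M := P) (R := ℂ)
    (LinearMap.exact_subtype_ker_map D)
  obtain ⟨y, hy⟩ := (hex (Φ' - p ⊗ₜ[ℂ] (1:P))).mp hDt
  obtain ⟨sy, hsy⟩ := TensorProduct.exists_finset (R := ℂ) y
  have hty : Φ' - p ⊗ₜ[ℂ] (1:P) = ∑ r ∈ sy, r.1 ⊗ₜ[ℂ] (r.2 : P) := by
    rw [← hy, hsy, map_sum]
    exact Finset.sum_congr rfl fun r _ => by rw [LinearMap.lTensor_tmul]; rfl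
  have hmul0 : ∑ r ∈ sy, r.1 * (r.2 : P) = 0 := by
    have h0 : LinearMap.mul' ℂ P (Φ' - p ⊗ₜ[ℂ] (1:P)) = 0 := by
      rw [map_sub, hmulΦ]
      simp
    rw [hty, map_sum] at h0
    simpa using h0
  rw [hty]
  have expand : (∑ r ∈ sy, r.1 ⊗ₜ[ℂ] (r.2 : P)) =
      ∑ r ∈ sy, (r.1 ⊗ₜ[ℂ] (r.2:P) - (r.1 * (r.2:P)) ⊗ₜ[ℂ] (1:P)) := by
    rw [Finset.sum_sub_distrib]
    have : ∑ r ∈ sy, (r.1 * (r.2:P)) ⊗ₜ[ℂ] (1:P) = 0 := by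
      rw [← TensorProduct.sum_tmul, hmul0, TensorProduct.zero_tmul]
    rw [this, sub_zero]
  rw [expand]
  refine Submodule.sum_mem _ fun r _ => Submodule.subset_span ?_
  refine ⟨r.1, 1, (r.2 : P), ?_, ?_, ?_⟩
  · rw [hBset]
    show ΔR 1 = (1:P) ⊗ₜ[ℂ] (1:H)
    rw [map_one]
    rfl
  · rw [hBset]
    show ΔR (r.2:P) = (r.2:P) ⊗ₜ[ℂ] (1:H)
    have h0 : (ΔR.toLinearMap - ι) ((r.2 : P)) = 0 := LinearMap.mem_ker.mp r.2.property
    rw [LinearMap.sub_apply, sub_eq_zero] at h0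
    exact h0
  · simp [mul_sub, Algebra.TensorProduct.tmul_mul_tmul]
end
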